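/- arXiv:0806.0906 — 4 statements merged into one kernel-verified Lean document; each statement's English description precedes it below -/
import Mathlib

section
/- Let G be a finite simple graph and let e = {s,t} be any edge of G. Then β(G) = β(G − e) + β(G/e) + β(G − [e]), where the empty graph is assigned β(∅) = 1 (which is automatic from the definition of β). -/
/-- One commutation move: swap two consecutive letters that are non-adjacent in `G`. -/
def CommStep {V : Type*} (G : SimpleGraph V) (w w' : List V) : Prop :=
  ∃ (a b : V) (u v : List V),
    ¬ G.Adj a b ∧ w = u ++ a :: b :: v ∧ w' = u ++ b :: a :: v

/-- Commutation equivalence of words: the equivalence relation generated by commutation moves. -/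
def commSetoid {V : Type*} (G : SimpleGraph V) : Setoid (List V) :=
  ⟨Relation.EqvGen (CommStep G), Relation.EqvGen.is_equivalence _⟩

/-- `bWords G k` = number of commutation classes of injective words of length `k` on `G`. -/
noncomputable def bWords {V : Type*} (G : SimpleGraph V) (k : ℕ) : ℕ :=
  Nat.card (Quotient (Setoid.comap
    (fun w : {w : List V // w.Nodup ∧ w.length = k} => w.1) (commSetoid G)))

/-- The boolean number `β(G) = (-1)^{|V|} ∑_{k=0}^{|V|} (-1)^k b_k(G)`. -/
noncomputable def booleanNumber {V : Type*} (G : SimpleGraph V) [Fintype V] : ℤ :=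
  (-1) ^ (Fintype.card V) *
    ∑ k ∈ Finset.range (Fintype.card V + 1), (-1) ^ k * (bWords G k : ℤ)

/-- Simple contraction of the edge `{s,t}` of `G`: the endpoints `s,t` are removed and
replaced by a single new vertex (here `none`), adjacent to every vertex that was adjacent
to `s` or to `t`; all other adjacencies are unchanged, and loops/multiple edges are discarded. -/
def contractEdge {V : Type*} (G : SimpleGraph V) (s t : V) :
    SimpleGraph (Option {v : V // v ≠ s ∧ v ≠ t}) where
  Adj a b :=
    match a, b with
    | some u, some v => G.Adj u.1 v.1
    | some u, none => G.Adj u.1 s ∨ G.Adj u.1 t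
    | none, some v => G.Adj v.1 s ∨ G.Adj v.1 t
    | none, none => False
  symm := by
    constructor
    rintro (_ | u) (_ | v) h
    · exact h
    · exact h
    · exact h
    · exact h.symm
  loopless := by
    constructor
    rintro (_ | u) h
    · exact h
    · exact G.irrefl h

open List Relation

set_option linter.unusedSectionVars false

section Words
variable {V : Type*} [DecidableEq V]

/-- filter keeping only the letters `a`, `b` -/
def pFilter (a b : V) (w : List V) : List V := w.filter (fun c => c = a ∨ c = b)

def Before (w : List V) (a b : V) : Prop := pFilter a b w = [a, b]

def ori (G : SimpleGraph V) (w : List V) (a b : V) : Prop := G.Adj a b ∧ Before w a b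

lemma pFilter_cons (a b c : V) (u : List V) :
    pFilter a b (c :: u) = if c = a ∨ c = b then c :: pFilter a b u else pFilter a b u := by
  simp only [pFilter, List.filter_cons]
  by_cases h : c = a ∨ c = b <;> simp [h]

lemma pFilter_append (a b : V) (u v : List V) :
    pFilter a b (u ++ v) = pFilter a b u ++ pFilter a b v := by
  simp [pFilter]

lemma mem_of_before_left {w : List V} {a b : V} (h : Before w a b) : a ∈ w := by
  have : a ∈ pFilter a b w := by rw [h]; simp
  exact List.mem_of_mem_filter this

lemma mem_of_before_right {w : List V} {a b : V} (h : Before w a b) : b ∈ w := by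
  have : b ∈ pFilter a b w := by rw [h]; simp
  exact List.mem_of_mem_filter this

lemma pFilter_swap_invariant (a b : V) (u v : List V) {x y : V}
    (h : ¬ ((x = a ∨ x = b) ∧ (y = a ∨ y = b))) :
    pFilter a b (u ++ x :: y :: v) = pFilter a b (u ++ y :: x :: v) := by
  rw [pFilter_append, pFilter_append, pFilter_cons, pFilter_cons, pFilter_cons, pFilter_cons]
  by_cases hx : x = a ∨ x = b <;> by_cases hy : y = a ∨ y = b <;> simp_all

lemma ori_commStep {G : SimpleGraph V} {w w' : List V} (h : CommStep G w w') :
    ori G w = ori G w' := by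
  obtain ⟨x, y, u, v, hxy, rfl, rfl⟩ := h
  by_cases hxey : x = y
  · subst hxey; rfl
  funext a b
  ext
  constructor <;> rintro ⟨hadj, hbef⟩ <;> refine ⟨hadj, ?_⟩ <;>
  · have hne : ¬ ((x = a ∨ x = b) ∧ (y = a ∨ y = b)) := by
      rintro ⟨hx | hx, hy | hy⟩ <;> subst hx <;> subst hy <;>
        first
        | exact hxey rfl
        | exact hxy hadj
        | exact hxy hadj.symm
    unfold Before at *
    rw [pFilter_swap_invariant a b u v hne] at *
    assumption

lemma perm_commStep {G : SimpleGraph V} {w w' : List V} (h : CommStep G w w') :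
    w.Perm w' := by
  obtain ⟨x, y, u, v, _, rfl, rfl⟩ := h
  exact List.Perm.append_left u (List.Perm.swap y x v)

lemma perm_eqvGen {G : SimpleGraph V} {w w' : List V}
    (h : Relation.EqvGen (CommStep G) w w') : w.Perm w' := by
  induction h with
  | rel _ _ h => exact perm_commStep h
  | refl => exact List.Perm.refl _
  | symm _ _ _ ih => exact ih.symm
  | trans _ _ _ _ _ ih1 ih2 => exact ih1.trans ih2

lemma ori_eqvGen {G : SimpleGraph V} {w w' : List V}
    (h : Relation.EqvGen (CommStep G) w w') : ori G w = ori G w' := by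
  induction h with
  | rel _ _ h => exact ori_commStep h
  | refl => rfl
  | symm _ _ _ ih => exact ih.symm
  | trans _ _ _ _ _ ih1 ih2 => exact ih1.trans ih2

lemma pFilter_eq_nil {a b : V} {u : List V} (ha : a ∉ u) (hb : b ∉ u) :
    pFilter a b u = [] := by
  rw [pFilter, List.filter_eq_nil_iff]
  rintro c hc hcp
  rcases of_decide_eq_true hcp with rfl | rfl
  exacts [ha hc, hb hc]

lemma pFilter_single {a x : V} {u : List V} (hu : u.Nodup) (ha : a ∉ u) (hx : x ∈ u) :
    pFilter a x u = [x] := by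
  induction u with
  | nil => simp at hx
  | cons c u ih =>
    have hcu : c ∉ u := (List.nodup_cons.1 hu).1
    have hau : a ∉ u := fun h => ha (List.mem_cons_of_mem _ h)
    rcases List.mem_cons.1 hx with rfl | hx'
    · rw [pFilter_cons, if_pos (Or.inr rfl), pFilter_eq_nil hau hcu]
    · have hca : c ≠ a := by rintro rfl; exact ha (List.mem_cons_self)
      have hcx : c ≠ x := by rintro rfl; exact hcu hx'
      rw [pFilter_cons, if_neg (by simp [hca, hcx])]
      exact ih (List.nodup_cons.1 hu).2 hau hx'

/-- dichotomy: in a nodup word containing both, one of the two orders holds. -/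
lemma before_or_before {w : List V} (hw : w.Nodup) {a b : V} (hab : a ≠ b)
    (ha : a ∈ w) (hb : b ∈ w) : Before w a b ∨ Before w b a := by
  induction w with
  | nil => simp at ha
  | cons c u ih =>
    have hu := (List.nodup_cons.1 hw).2
    have hc := (List.nodup_cons.1 hw).1
    rcases List.mem_cons.1 ha with rfl | ha'
    · left
      have hbu : b ∈ u := by
        rcases List.mem_cons.1 hb with rfl | h; · exact absurd rfl hab
        · exact h
      rw [Before, pFilter_cons, if_pos (Or.inl rfl), pFilter_single hu hc hbu]
    · rcases List.mem_cons.1 hb with rfl | hb'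
      · right
        rw [Before, pFilter_cons, if_pos (Or.inl rfl), pFilter_single hu hc ha']
      · have hca : c ≠ a := by rintro rfl; exact hc ha'
        have hcb : c ≠ b := by rintro rfl; exact hc hb'
        rcases ih hu ha' hb' with h | h
        · left; rw [Before, pFilter_cons, if_neg (by simp [hca, hcb])]; exact h
        · right; rw [Before, pFilter_cons, if_neg (by simp [hcb, hca])]; exact h

lemma pFilter_comm (a b : V) (w : List V) : pFilter a b w = pFilter b a w := by
  unfold pFilter
  exact List.filter_congr (fun c _ => by by_cases h1 : c = a <;> by_cases h2 : c = b <;> simp [h1, h2])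

lemma not_before_both {w : List V} {a b : V} (hab : a ≠ b)
    (h1 : Before w a b) (h2 : Before w b a) : False := by
  unfold Before at h1 h2
  rw [pFilter_comm] at h1
  rw [h1] at h2
  exact hab (by injection h2)

/-- `Before` implies earlier index. -/
lemma indexOf_lt_of_before {w : List V} {a b : V} (hab : a ≠ b)
    (h : Before w a b) : w.idxOf a < w.idxOf b := by
  induction w with
  | nil => exact absurd (mem_of_before_left h) (by simp)
  | cons c u ih =>
    rw [Before, pFilter_cons] at h
    by_cases hp : (c = a ∨ c = b)
    · rw [if_pos hp] at h
      have hc : c = a := by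
        rcases hp with rfl | rfl
        · rfl
        · exfalso; injection h with h1 _; exact hab h1.symm
      subst hc
      injection h with _ h2
      have hbu : b ∈ u := by
        have : b ∈ pFilter c b u := by rw [h2]; simp
        exact List.mem_of_mem_filter this
      rw [List.idxOf_cons_self, List.idxOf_cons_ne _ hab]
      exact Nat.succ_pos _
    · rw [if_neg hp] at h
      push_neg at hp
      have := ih h
      rw [List.idxOf_cons_ne _ hp.1, List.idxOf_cons_ne _ hp.2]
      exact Nat.succ_lt_succ this

lemma before_of_indexOf_lt {w : List V} (hw : w.Nodup) {a b : V} (hab : a ≠ b)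
    (ha : a ∈ w) (hb : b ∈ w) (h : w.idxOf a < w.idxOf b) : Before w a b := by
  rcases before_or_before hw hab ha hb with h' | h'
  · exact h'
  · exact absurd (indexOf_lt_of_before (Ne.symm hab) h') (by omega)

end Words
section Words2
variable {V : Type*} [DecidableEq V]

lemma eqvGen_cons_congr {G : SimpleGraph V} {u v : List V} (x : V)
    (h : Relation.EqvGen (CommStep G) u v) :
    Relation.EqvGen (CommStep G) (x :: u) (x :: v) := by
  induction h with
  | rel a b h =>
    obtain ⟨c, d, p, q, hcd, rfl, rfl⟩ := h
    exact Relation.EqvGen.rel _ _ ⟨c, d, x :: p, q, hcd, rfl, rfl⟩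
  | refl a => exact Relation.EqvGen.refl _
  | symm a b _ ih => exact ih.symm _ _
  | trans a b c _ _ ih1 ih2 => exact ih1.trans _ _ _ ih2

lemma eqvGen_bubble {G : SimpleGraph V} (a : V) :
    ∀ (p q : List V), (∀ x ∈ p, ¬ G.Adj x a) →
    Relation.EqvGen (CommStep G) (p ++ a :: q) (a :: (p ++ q)) := by
  intro p
  induction p with
  | nil => intro q _; exact Relation.EqvGen.refl _
  | cons x p ih =>
    intro q hp
    have h1 : Relation.EqvGen (CommStep G) (x :: (p ++ a :: q)) (x :: a :: (p ++ q)) :=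
      eqvGen_cons_congr x (ih q (fun y hy => hp y (List.mem_cons_of_mem _ hy)))
    have h2 : CommStep G (x :: a :: (p ++ q)) (a :: x :: (p ++ q)) :=
      ⟨x, a, [], p ++ q, hp x (List.mem_cons_self), rfl, rfl⟩
    exact h1.trans _ _ _ (Relation.EqvGen.rel _ _ h2)

lemma ori_cons_eq_of_not_mem {G : SimpleGraph V} {a : V} {u v : List V}
    (hau : a ∉ u) (hav : a ∉ v) (h : ori G (a :: u) = ori G (a :: v)) :
    ori G u = ori G v := by
  funext c d
  have key : ∀ (w : List V), a ∉ w → ∀ c d : V, (c = a ∨ d = a) → ¬ ori G w c d := by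
    rintro w hw c d hcd ⟨hadj, hbef⟩
    rcases hcd with rfl | rfl
    · exact hw (mem_of_before_left hbef)
    · exact hw (mem_of_before_right hbef)
  by_cases hca : c = a
  · ext; exact ⟨fun hh => absurd hh (key u hau c d (Or.inl hca)),
      fun hh => absurd hh (key v hav c d (Or.inl hca))⟩
  by_cases hda : d = a
  · ext; exact ⟨fun hh => absurd hh (key u hau c d (Or.inr hda)),
      fun hh => absurd hh (key v hav c d (Or.inr hda))⟩
  · have h1 : ori G (a :: u) c d = ori G u c d := by
      unfold ori Before
      rw [pFilter_cons, if_neg (by simp [Ne.symm hca, Ne.symm hda] : ¬(a = c ∨ a = d))]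
    have h2 : ori G (a :: v) c d = ori G v c d := by
      unfold ori Before
      rw [pFilter_cons, if_neg (by simp [Ne.symm hca, Ne.symm hda] : ¬(a = c ∨ a = d))]
    rw [← h1, ← h2, h]

/-- Completeness: nodup words with the same support and the same induced orientation
are commutation equivalent. -/
lemma eqvGen_of_ori_eq {G : SimpleGraph V} :
    ∀ (w w' : List V), w.Nodup → w'.Nodup → w.toFinset = w'.toFinset →
    ori G w = ori G w' → Relation.EqvGen (CommStep G) w w' := by
  intro w
  induction w with
  | nil =>
    intro w' _ hw' hfin _
    have : w' = [] := by
      cases w' with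
      | nil => rfl
      | cons x u => exfalso; have : x ∈ ([] : List V).toFinset := by
                      rw [hfin]; simp
                    simp at this
    rw [this]; exact Relation.EqvGen.refl _
  | cons a u ih =>
    intro w' hw hw' hfin hori
    have hau : a ∉ u := (List.nodup_cons.1 hw).1
    have hu : u.Nodup := (List.nodup_cons.1 hw).2
    have haw' : a ∈ w' := by
      have : a ∈ w'.toFinset := by rw [← hfin]; simp
      simpa using this
    obtain ⟨p, q, rfl⟩ := List.append_of_mem haw'
    have hnd := hw'
    rw [List.nodup_append] at hnd
    have hap : a ∉ p := fun h => hnd.2.2 _ h _ List.mem_cons_self rfl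
    have haq : a ∉ q := (List.nodup_cons.1 hnd.2.1).1
    have hq : q.Nodup := (List.nodup_cons.1 hnd.2.1).2
    have hp : p.Nodup := hnd.1
    -- every letter of p is non-adjacent to a
    have hpa : ∀ x ∈ p, ¬ G.Adj x a := by
      intro x hxp hadj
      have hxa : x ≠ a := fun h => hap (h ▸ hxp)
      have hxw : x ∈ a :: u := by
        have : x ∈ (a :: u).toFinset := by rw [hfin]; simp [hxp]
        simpa using this
      have hxu : x ∈ u := by
        rcases List.mem_cons.1 hxw with rfl | h; exact absurd rfl hxa
        exact h
      -- in w, a is before x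
      have hb1 : Before (a :: u) a x := by
        rw [Before, pFilter_cons, if_pos (Or.inl rfl), pFilter_single hu hau hxu]
      have hxq : x ∉ q := fun h => hnd.2.2 _ hxp _ (List.mem_cons_of_mem _ h) rfl
      have hb2 : Before (p ++ a :: q) x a := by
        rw [Before, pFilter_append, pFilter_comm x a p, pFilter_single hp hap hxp,
          pFilter_cons, if_pos (Or.inr rfl), pFilter_eq_nil hxq haq]
        rfl
      have hori1 : ori G (a :: u) a x := ⟨hadj.symm, hb1⟩
      have hori2 : ori G (p ++ a :: q) a x := by rw [← hori]; exact hori1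
      exact not_before_both hxa hb2 hori2.2
    -- bubble a to the front of w'
    have hbub := eqvGen_bubble a p q hpa
    have horiw' : ori G (a :: (p ++ q)) = ori G (p ++ a :: q) :=
      (ori_eqvGen hbub).symm
    have hori2 : ori G (a :: u) = ori G (a :: (p ++ q)) := by rw [hori, horiw']
    have hapq : a ∉ p ++ q := by
      rw [List.mem_append]; rintro (h | h); exacts [hap h, haq h]
    have horitail : ori G u = ori G (p ++ q) := ori_cons_eq_of_not_mem hau hapq hori2
    have hndpq : (p ++ q).Nodup := by
      rw [List.nodup_append]
      exact ⟨hp, hq, fun y hy z hz hyz => hnd.2.2 _ hy _ (List.mem_cons_of_mem _ hz) hyz⟩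
    have hfintail : u.toFinset = (p ++ q).toFinset := by
      ext x
      simp only [List.mem_toFinset, List.mem_append]
      constructor
      · intro hxu
        have : x ∈ (p ++ a :: q).toFinset := by
          rw [← hfin]; simp [hxu]
        simp only [List.mem_toFinset, List.mem_append, List.mem_cons] at this
        rcases this with h | h | h
        · exact Or.inl h
        · exact absurd (h ▸ hxu) hau
        · exact Or.inr h
      · intro hx
        have hxa : x ≠ a := by
          rintro rfl
          rcases hx with h | h; exacts [hap h, haq h]
        have : x ∈ (a :: u).toFinset := by
          rw [hfin]
          simp only [List.mem_toFinset, List.mem_append, List.mem_cons]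
          rcases hx with h | h; exacts [Or.inl h, Or.inr (Or.inr h)]
        simp only [List.mem_toFinset, List.mem_cons] at this
        rcases this with h | h; exacts [absurd h hxa, h]
    have htail := ih (p ++ q) hu hndpq hfintail horitail
    exact (eqvGen_cons_congr a htail).trans _ _ _ (hbub.symm _ _)

end Words2
section GoodSec
variable {V : Type*} [DecidableEq V]

/-- Abstract characterization of realizable orientations. -/
def Good (G : SimpleGraph V) (S : Finset V) (r : V → V → Prop) : Prop :=
  (∀ a b, r a b → G.Adj a b ∧ a ∈ S ∧ b ∈ S) ∧
  (∀ a b, G.Adj a b → a ∈ S → b ∈ S → r a b ∨ r b a) ∧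
  (∀ a, ¬ Relation.TransGen r a a)

def Realizable (G : SimpleGraph V) (S : Finset V) (r : V → V → Prop) : Prop :=
  ∃ w : List V, w.Nodup ∧ w.toFinset = S ∧ ori G w = r

lemma transGen_lt {r : V → V → Prop} {f : V → ℕ} (hf : ∀ a b, r a b → f a < f b)
    {a b : V} (h : Relation.TransGen r a b) : f a < f b := by
  induction h with
  | single h => exact hf _ _ h
  | tail _ h ih => exact ih.trans (hf _ _ h)

lemma good_of_realizable {G : SimpleGraph V} {S : Finset V} {r : V → V → Prop}
    (h : Realizable G S r) : Good G S r := by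
  obtain ⟨w, hnd, hfin, rfl⟩ := h
  refine ⟨?_, ?_, ?_⟩
  · rintro a b ⟨hadj, hbef⟩
    exact ⟨hadj, by rw [← hfin]; simpa using mem_of_before_left hbef,
      by rw [← hfin]; simpa using mem_of_before_right hbef⟩
  · intro a b hadj ha hb
    rw [← hfin] at ha hb
    rcases before_or_before hnd hadj.ne (by simpa using ha) (by simpa using hb) with h | h
    · exact Or.inl ⟨hadj, h⟩
    · exact Or.inr ⟨hadj.symm, h⟩
  · intro a h
    have : ∀ a b, ori G w a b → w.idxOf a < w.idxOf b := by
      rintro a b ⟨hadj, hbef⟩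
      exact indexOf_lt_of_before hadj.ne hbef
    exact absurd (transGen_lt this h) (by omega)

/-- topological sorting of a finite DAG supported on `S`. -/
lemma topsort [Finite V] :
    ∀ (n : ℕ) (S : Finset V), S.card = n → ∀ (p : V → V → Prop),
    (∀ a b, p a b → a ∈ S ∧ b ∈ S) → (∀ a, ¬ Relation.TransGen p a a) →
    ∃ w : List V, w.Nodup ∧ w.toFinset = S ∧
      ∀ a b, p a b → w.idxOf a < w.idxOf b := by
  intro n
  induction n with
  | zero =>
    intro S hS p h1 _
    refine ⟨[], by simp, by simpa using (Finset.card_eq_zero.1 hS).symm, ?_⟩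
    intro a b hab
    exact absurd (h1 a b hab).1 (by simp [Finset.card_eq_zero.1 hS])
  | succ n ihn =>
    intro S hS p h1 h2
    have hSne : S.Nonempty := Finset.card_pos.1 (by omega)
    have hwf : WellFounded (Relation.TransGen p) := by
      have : IsTrans V (Relation.TransGen p) := ⟨fun _ _ _ => Relation.TransGen.trans⟩
      have : IsIrrefl V (Relation.TransGen p) := ⟨h2⟩
      exact Finite.wellFounded_of_trans_of_irrefl _
    obtain ⟨m, hmS, hmin⟩ := hwf.has_min ↑S ⟨hSne.choose, hSne.choose_spec⟩
    have hnotm : ∀ b, ¬ p b m := by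
      intro b hb
      exact hmin b (h1 b m hb).1 (Relation.TransGen.single hb)
    set p' : V → V → Prop := fun a b => p a b ∧ a ≠ m with hp'
    have h1' : ∀ a b, p' a b → a ∈ S.erase m ∧ b ∈ S.erase m := by
      rintro a b ⟨hab, ham⟩
      have hbm : b ≠ m := fun h => hnotm a (h ▸ hab)
      exact ⟨Finset.mem_erase.2 ⟨ham, (h1 a b hab).1⟩,
        Finset.mem_erase.2 ⟨hbm, (h1 a b hab).2⟩⟩
    have h2' : ∀ a, ¬ Relation.TransGen p' a a := by
      intro a h
      exact h2 a (Relation.TransGen.mono (fun x y hxy => hxy.1) a a h)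
    obtain ⟨w', hnd', hfin', hidx'⟩ := ihn (S.erase m)
      (by rw [Finset.card_erase_of_mem hmS]; omega) p' h1' h2'
    have hmw' : m ∉ w' := by
      intro h
      have : m ∈ S.erase m := by rw [← hfin']; simpa using h
      simp at this
    refine ⟨m :: w', List.nodup_cons.2 ⟨hmw', hnd'⟩, ?_, ?_⟩
    · rw [List.toFinset_cons, hfin', Finset.insert_erase hmS]
    · intro a b hab
      have hbm : b ≠ m := fun h => hnotm a (h ▸ hab)
      by_cases ham : a = m
      · subst ham
        rw [List.idxOf_cons_self, List.idxOf_cons_ne _ hbm.symm]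
        exact Nat.succ_pos _
      · rw [List.idxOf_cons_ne _ (Ne.symm ham), List.idxOf_cons_ne _ hbm.symm]
        exact Nat.succ_lt_succ (hidx' a b ⟨hab, ham⟩)

lemma realizable_of_good [Finite V] {G : SimpleGraph V} {S : Finset V} {r : V → V → Prop}
    (h : Good G S r) : Realizable G S r := by
  obtain ⟨h1, h2, h3⟩ := h
  obtain ⟨w, hnd, hfin, hidx⟩ := topsort S.card S rfl r (fun a b hab => ⟨(h1 a b hab).2.1, (h1 a b hab).2.2⟩) h3
  refine ⟨w, hnd, hfin, ?_⟩
  funext a b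
  ext
  constructor
  · rintro ⟨hadj, hbef⟩
    have ha : a ∈ S := by rw [← hfin]; simpa using mem_of_before_left hbef
    have hb : b ∈ S := by rw [← hfin]; simpa using mem_of_before_right hbef
    rcases h2 a b hadj ha hb with h | h
    · exact h
    · exfalso
      have ha1 := indexOf_lt_of_before hadj.ne hbef
      have ha2 := hidx b a h
      omega
  · intro hab
    obtain ⟨hadj, ha, hb⟩ := h1 a b hab
    refine ⟨hadj, before_of_indexOf_lt hnd hadj.ne ?_ ?_ (hidx a b hab)⟩
    · rw [← List.mem_toFinset, hfin]; exact ha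
    · rw [← List.mem_toFinset, hfin]; exact hb

lemma realizable_iff_good [Finite V] {G : SimpleGraph V} {S : Finset V} {r : V → V → Prop} :
    Realizable G S r ↔ Good G S r :=
  ⟨good_of_realizable, realizable_of_good⟩

end GoodSec
section Counting
variable {V : Type*} [Fintype V] [DecidableEq V]

/-- Number of good orientations on support `S`. -/
noncomputable def NO (G : SimpleGraph V) (S : Finset V) : ℕ :=
  Nat.card {r : V → V → Prop // Good G S r}

lemma bWords_eq_sum (G : SimpleGraph V) (k : ℕ) :
    bWords G k = ∑ S ∈ Finset.univ.filter (fun S : Finset V => S.card = k), NO G S := by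
  classical
  -- the intermediate subtype
  set Ψ := {p : Finset V × (V → V → Prop) // p.1.card = k ∧ Good G p.1 p.2} with hΨ
  have hcard1 : bWords G k = Nat.card Ψ := by
    have hF : ∀ w : {w : List V // w.Nodup ∧ w.length = k},
        w.1.toFinset.card = k ∧ Good G w.1.toFinset (ori G w.1) := by
      intro w
      refine ⟨by rw [List.toFinset_card_of_nodup w.2.1]; exact w.2.2, ?_⟩
      exact good_of_realizable ⟨w.1, w.2.1, rfl, rfl⟩
    let F : Quotient (Setoid.comap
        (fun w : {w : List V // w.Nodup ∧ w.length = k} => w.1) (commSetoid G)) → Ψ :=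
      Quotient.lift (fun w => ⟨(w.1.toFinset, ori G w.1), hF w⟩)
        (by
          intro w w' h
          have h' : Relation.EqvGen (CommStep G) w.1 w'.1 := h
          exact Subtype.ext (Prod.ext (by ext x; simp [(perm_eqvGen h').mem_iff]) (ori_eqvGen h')))
    have hbij : Function.Bijective F := by
      constructor
      · intro q q'
        induction q using Quotient.inductionOn with
        | h w =>
        induction q' using Quotient.inductionOn with
        | h w' =>
        intro hFq
        have h1 : w.1.toFinset = w'.1.toFinset := by
          have := congrArg (fun x : Ψ => x.1.1) hFq; simpa [F] using this
        have h2 : ori G w.1 = ori G w'.1 := by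
          have := congrArg (fun x : Ψ => x.1.2) hFq; simpa [F] using this
        exact Quotient.sound (eqvGen_of_ori_eq w.1 w'.1 w.2.1 w'.2.1 h1 h2)
      · rintro ⟨⟨S, r⟩, hk, hgood⟩
        obtain ⟨w, hnd, hfin, hori⟩ := realizable_of_good hgood
        have hlen : w.length = k := by
          rw [← List.toFinset_card_of_nodup hnd, hfin, hk]
        refine ⟨Quotient.mk _ ⟨w, hnd, hlen⟩, ?_⟩
        exact Subtype.ext (Prod.ext (by simpa [F] using hfin) (by simpa [F] using hori))
    rw [bWords]
    exact Nat.card_eq_of_bijective F hbij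
  -- split Ψ as a sigma type
  have hcard2 : Nat.card Ψ = ∑ S ∈ Finset.univ.filter (fun S : Finset V => S.card = k), NO G S := by
    have e : Ψ ≃ Σ S : {S : Finset V // S.card = k}, {r : V → V → Prop // Good G S.1 r} :=
      { toFun := fun p => ⟨⟨p.1.1, p.2.1⟩, ⟨p.1.2, p.2.2⟩⟩
        invFun := fun x => ⟨(x.1.1, x.2.1), x.1.2, x.2.2⟩
        left_inv := fun p => rfl
        right_inv := fun x => rfl }
    rw [Nat.card_congr e]
    letI : ∀ S : {S : Finset V // S.card = k}, Fintype {r : V → V → Prop // Good G S.1 r} :=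
      fun S => Fintype.ofFinite _
    rw [Nat.card_eq_fintype_card, Fintype.card_sigma]
    have step1 : ∑ i : {S : Finset V // S.card = k}, Fintype.card {r : V → V → Prop // Good G i.1 r}
        = ∑ i : {S : Finset V // S.card = k}, NO G i.1 :=
      Finset.sum_congr rfl (fun i _ => (Nat.card_eq_fintype_card).symm)
    rw [step1]
    exact (Finset.sum_subtype (p := fun S : Finset V => S.card = k) _
      (fun x => by simp) (NO G)).symm
  rw [hcard1, hcard2]

lemma booleanNumber_eq_sum (G : SimpleGraph V) :
    booleanNumber G =
      (-1) ^ (Fintype.card V) * ∑ S : Finset V, (-1) ^ S.card * (NO G S : ℤ) := by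
  rw [booleanNumber]
  congr 1
  rw [← Finset.sum_fiberwise_of_maps_to (g := fun S : Finset V => S.card)
    (t := Finset.range (Fintype.card V + 1))
    (fun S _ => Finset.mem_range.2 (Nat.lt_succ_of_le (Finset.card_le_univ S)))
    (fun S => (-1 : ℤ) ^ S.card * (NO G S : ℤ))]
  refine Finset.sum_congr rfl ?_
  intro k _
  rw [bWords_eq_sum, Nat.cast_sum, Finset.mul_sum]
  refine Finset.sum_congr rfl ?_
  intro S hS
  have : S.card = k := (Finset.mem_filter.1 hS).2
  rw [this]

end Counting
section DelCon
variable {V : Type*} [DecidableEq V]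

/-- the two orderings of the pair `{s,t}` -/
def stPair (s t a b : V) : Prop := (a = s ∧ b = t) ∨ (a = t ∧ b = s)

def extOri (s t : V) (q : V → V → Prop) : V → V → Prop :=
  fun a b => q a b ∨ (a = s ∧ b = t)

def delOri (s t : V) (r : V → V → Prop) : V → V → Prop :=
  fun a b => r a b ∧ ¬ stPair s t a b

def conOri (s t : V) (q : V → V → Prop) :
    Option {v : V // v ≠ s ∧ v ≠ t} → Option {v : V // v ≠ s ∧ v ≠ t} → Prop
  | some a, some b => q a.1 b.1
  | some a, none => q a.1 s ∨ q a.1 t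
  | none, some b => q s b.1 ∨ q t b.1
  | none, none => False

def toOpt (s t : V) (a : V) : Option {v : V // v ≠ s ∧ v ≠ t} :=
  if h : a ≠ s ∧ a ≠ t then some ⟨a, h⟩ else none

def expOri (G : SimpleGraph V) (s t : V) (S : Finset V)
    (r' : Option {v : V // v ≠ s ∧ v ≠ t} → Option {v : V // v ≠ s ∧ v ≠ t} → Prop) :
    V → V → Prop :=
  fun a b => (G.deleteEdges {s(s,t)}).Adj a b ∧ a ∈ S ∧ b ∈ S ∧ r' (toOpt s t a) (toOpt s t b)

def optSupp (s t : V) (S : Finset V) : Finset (Option {v : V // v ≠ s ∧ v ≠ t}) :=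
  insert none ((S.subtype (fun v => v ≠ s ∧ v ≠ t)).map
    ⟨some, Option.some_injective _⟩)

lemma mem_optSupp_some {s t : V} {S : Finset V} (u : {v : V // v ≠ s ∧ v ≠ t}) :
    some u ∈ optSupp s t S ↔ u.1 ∈ S := by
  simp [optSupp]

lemma mem_optSupp_none {s t : V} {S : Finset V} : none ∈ optSupp s t S := by
  simp [optSupp]

lemma adj_del_iff {G : SimpleGraph V} {s t a b : V} :
    (G.deleteEdges {s(s,t)}).Adj a b ↔ G.Adj a b ∧ ¬ stPair s t a b := by
  rw [SimpleGraph.deleteEdges_adj]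
  constructor
  · rintro ⟨h1, h2⟩
    refine ⟨h1, ?_⟩
    rintro (⟨rfl, rfl⟩ | ⟨rfl, rfl⟩)
    · exact h2 rfl
    · exact h2 (Sym2.eq_swap)
  · rintro ⟨h1, h2⟩
    refine ⟨h1, ?_⟩
    intro hmem
    rw [Set.mem_singleton_iff] at hmem
    replace hmem := (Sym2.mk_eq_mk_iff (p := (a, b)) (q := (s, t))).1 hmem
    rcases hmem with h | h
    · exact h2 (Or.inl ⟨(Prod.ext_iff.1 h).1, (Prod.ext_iff.1 h).2⟩)
    · exact h2 (Or.inr ⟨(Prod.ext_iff.1 h).1, (Prod.ext_iff.1 h).2⟩)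

lemma transGen_map {α β : Type*} {q : α → α → Prop} {r : β → β → Prop} (f : α → β)
    (h : ∀ a b, q a b → r (f a) (f b)) {a b : α}
    (htg : Relation.TransGen q a b) : Relation.TransGen r (f a) (f b) := by
  induction htg with
  | single hs => exact Relation.TransGen.single (h _ _ hs)
  | tail _ hs ih => exact ih.tail (h _ _ hs)

variable {G : SimpleGraph V} {s t : V} {S : Finset V} {q r : V → V → Prop}

lemma q_not_st (hq : Good (G.deleteEdges {s(s,t)}) S q) : ¬ q s t ∧ ¬ q t s := by
  constructor
  · intro h
    have := (hq.1 s t h).1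
    rw [adj_del_iff] at this
    exact this.2 (Or.inl ⟨rfl, rfl⟩)
  · intro h
    have := (hq.1 t s h).1
    rw [adj_del_iff] at this
    exact this.2 (Or.inr ⟨rfl, rfl⟩)

lemma del_ext1 (hq : Good (G.deleteEdges {s(s,t)}) S q) :
    delOri s t (extOri s t q) = q := by
  funext a b
  ext
  unfold delOri extOri
  constructor
  · rintro ⟨h1 | h1, h2⟩
    · exact h1
    · exact absurd (Or.inl h1) h2
  · intro h
    refine ⟨Or.inl h, ?_⟩
    rintro (⟨rfl, rfl⟩ | ⟨rfl, rfl⟩)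
    · exact (q_not_st hq).1 h
    · exact (q_not_st hq).2 h

lemma del_ext2 (hq : Good (G.deleteEdges {s(s,t)}) S q) :
    delOri s t (extOri t s q) = q := by
  funext a b
  ext
  unfold delOri extOri
  constructor
  · rintro ⟨h1 | h1, h2⟩
    · exact h1
    · exact absurd (Or.inr h1) h2
  · intro h
    refine ⟨Or.inl h, ?_⟩
    rintro (⟨rfl, rfl⟩ | ⟨rfl, rfl⟩)
    · exact (q_not_st hq).1 h
    · exact (q_not_st hq).2 h

lemma good_del (hr : Good G S r) : Good (G.deleteEdges {s(s,t)}) S (delOri s t r) := by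
  obtain ⟨h1, h2, h3⟩ := hr
  refine ⟨?_, ?_, ?_⟩
  · rintro a b ⟨hab, hnp⟩
    exact ⟨adj_del_iff.2 ⟨(h1 a b hab).1, hnp⟩, (h1 a b hab).2.1, (h1 a b hab).2.2⟩
  · intro a b hadj ha hb
    rw [adj_del_iff] at hadj
    rcases h2 a b hadj.1 ha hb with h | h
    · exact Or.inl ⟨h, hadj.2⟩
    · refine Or.inr ⟨h, ?_⟩
      rintro (⟨rfl, rfl⟩ | ⟨rfl, rfl⟩)
      · exact hadj.2 (Or.inr ⟨rfl, rfl⟩)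
      · exact hadj.2 (Or.inl ⟨rfl, rfl⟩)
  · intro a h
    exact h3 a (Relation.TransGen.mono (fun x y hxy => hxy.1) a a h)

lemma good_r_st_or_ts (hr : Good G S r) (he : G.Adj s t) (hs : s ∈ S) (ht : t ∈ S) :
    r s t ∨ r t s := hr.2.1 s t he hs ht

lemma good_not_both (hr : Good G S r) : ¬ (r s t ∧ r t s) := by
  rintro ⟨h1, h2⟩
  exact hr.2.2 s ((Relation.TransGen.single h1).tail h2)

lemma ext1_del_eq (hr : Good G S r) (hst : r s t) (hts : ¬ r t s) :
    extOri s t (delOri s t r) = r := by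
  funext a b
  ext
  unfold extOri delOri
  constructor
  · rintro (⟨h, _⟩ | ⟨rfl, rfl⟩)
    · exact h
    · exact hst
  · intro h
    by_cases hp : stPair s t a b
    · rcases hp with ⟨rfl, rfl⟩ | ⟨rfl, rfl⟩
      · exact Or.inr ⟨rfl, rfl⟩
      · exact absurd h hts
    · exact Or.inl ⟨h, hp⟩

lemma ext2_del_eq (hr : Good G S r) (hts : r t s) (hst : ¬ r s t) :
    extOri t s (delOri s t r) = r := by
  funext a b
  ext
  unfold extOri delOri
  constructor
  · rintro (⟨h, _⟩ | ⟨rfl, rfl⟩)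
    · exact h
    · exact hts
  · intro h
    by_cases hp : stPair s t a b
    · rcases hp with ⟨rfl, rfl⟩ | ⟨rfl, rfl⟩
      · exact absurd h hst
      · exact Or.inr ⟨rfl, rfl⟩
    · exact Or.inl ⟨h, hp⟩

/-- adding the edge `s → t` to an acyclic relation with no path `t ↝ s` stays acyclic -/
lemma transGen_ext_decomp {a b : V}
    (h : Relation.TransGen (extOri s t q) a b) :
    Relation.TransGen q a b ∨
      (Relation.ReflTransGen q a s ∧ Relation.ReflTransGen q t b) := by
  induction h with
  | single hs =>
    rcases hs with h | ⟨rfl, rfl⟩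
    · exact Or.inl (Relation.TransGen.single h)
    · exact Or.inr ⟨Relation.ReflTransGen.refl, Relation.ReflTransGen.refl⟩
  | tail _ hs ih =>
    rcases hs with h | ⟨rfl, rfl⟩
    · rcases ih with ih | ⟨ih1, ih2⟩
      · exact Or.inl (ih.tail h)
      · exact Or.inr ⟨ih1, ih2.tail h⟩
    · rcases ih with ih | ⟨ih1, ih2⟩
      · exact Or.inr ⟨ih.to_reflTransGen, Relation.ReflTransGen.refl⟩
      · exact Or.inr ⟨ih1, Relation.ReflTransGen.refl⟩
    -- note: second subcase discards info; justified since conclusion only needs this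

lemma ext_irrefl (hst : s ≠ t) (hirr : ∀ a, ¬ Relation.TransGen q a a)
    (hnots : ¬ Relation.TransGen q t s) (a : V) :
    ¬ Relation.TransGen (extOri s t q) a a := by
  intro h
  rcases transGen_ext_decomp h with h | ⟨h1, h2⟩
  · exact hirr a h
  · have : Relation.ReflTransGen q t s := h2.trans h1
    rcases (Relation.reflTransGen_iff_eq_or_transGen.1 this) with h' | h'
    · exact hst h'
    · exact hnots h'

lemma ext_good (he : G.Adj s t) (hs : s ∈ S) (ht : t ∈ S)
    (hq : Good (G.deleteEdges {s(s,t)}) S q)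
    (hnots : ¬ Relation.TransGen q t s) : Good G S (extOri s t q) := by
  obtain ⟨h1, h2, h3⟩ := hq
  refine ⟨?_, ?_, ext_irrefl he.ne h3 hnots⟩
  · rintro a b (h | ⟨rfl, rfl⟩)
    · have := h1 a b h
      rw [adj_del_iff] at this
      exact ⟨this.1.1, this.2⟩
    · exact ⟨he, hs, ht⟩
  · intro a b hadj ha hb
    by_cases hp : stPair s t a b
    · rcases hp with ⟨rfl, rfl⟩ | ⟨rfl, rfl⟩
      · exact Or.inl (Or.inr ⟨rfl, rfl⟩)
      · exact Or.inr (Or.inr ⟨rfl, rfl⟩)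
    · rcases h2 a b (adj_del_iff.2 ⟨hadj, hp⟩) ha hb with h | h
      · exact Or.inl (Or.inl h)
      · exact Or.inr (Or.inl h)

lemma good_ext1_imp (he : G.Adj s t) (hgood : Good G S (extOri s t q)) :
    ¬ Relation.TransGen q t s := by
  intro h
  have h1 : Relation.TransGen (extOri s t q) t s :=
    Relation.TransGen.mono (fun x y hxy => Or.inl hxy) t s h
  exact hgood.2.2 t (h1.tail (Or.inr ⟨rfl, rfl⟩))

end DelCon
section DelCon2
variable {V : Type*} [DecidableEq V]

/-- representatives in `V` of a contracted vertex -/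
def Pm (s t : V) : Option {v : V // v ≠ s ∧ v ≠ t} → V → Prop
  | none, a => a = s ∨ a = t
  | some u, a => a = u.1

variable {G : SimpleGraph V} {s t : V} {S : Finset V} {q : V → V → Prop}

/-- decomposition of transitive paths in the contracted relation -/
lemma con_decomp (hirr : ∀ a, ¬ Relation.TransGen q a a)
    (hnost : ¬ Relation.TransGen q s t) (hnots : ¬ Relation.TransGen q t s)
    {x y : Option {v : V // v ≠ s ∧ v ≠ t}}
    (h : Relation.TransGen (conOri s t q) x y) :
    (∃ a b, Pm s t x a ∧ Pm s t y b ∧ Relation.TransGen q a b) ∨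
    (∃ a γ α b, Pm s t x a ∧ Pm s t y b ∧ (γ = s ∨ γ = t) ∧ (α = s ∨ α = t) ∧
      (Relation.TransGen q a γ ∨ (x = none ∧ a = γ)) ∧ Relation.TransGen q α b) := by
  induction h with
  | @single y' hy =>
    left
    cases x with
    | none =>
      cases y' with
      | none => exact absurd hy (by simp [conOri])
      | some v =>
        simp only [conOri] at hy
        rcases hy with h | h
        · exact ⟨s, v.1, Or.inl rfl, rfl, Relation.TransGen.single h⟩
        · exact ⟨t, v.1, Or.inr rfl, rfl, Relation.TransGen.single h⟩
    | some u =>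
      cases y' with
      | none =>
        simp only [conOri] at hy
        rcases hy with h | h
        · exact ⟨u.1, s, rfl, Or.inl rfl, Relation.TransGen.single h⟩
        · exact ⟨u.1, t, rfl, Or.inr rfl, Relation.TransGen.single h⟩
      | some v =>
        simp only [conOri] at hy
        exact ⟨u.1, v.1, rfl, rfl, Relation.TransGen.single hy⟩
  | @tail y' z hxy hyz ih =>
    rcases ih with ⟨a, b, hxa, hyb, htg⟩ | ⟨a, γ, α, b, hxa, hyb, hγ, hα, hfirst, hlast⟩
    · -- D1
      cases y' with
      | some u =>
        have hbu : b = u.1 := hyb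
        subst hbu
        cases z with
        | some v =>
          simp only [conOri] at hyz
          exact Or.inl ⟨a, v.1, hxa, rfl, htg.tail hyz⟩
        | none =>
          simp only [conOri] at hyz
          rcases hyz with h | h
          · exact Or.inl ⟨a, s, hxa, Or.inl rfl, htg.tail h⟩
          · exact Or.inl ⟨a, t, hxa, Or.inr rfl, htg.tail h⟩
      | none =>
        have hb : b = s ∨ b = t := hyb
        cases z with
        | none => exact absurd hyz (by simp [conOri])
        | some v =>
          simp only [conOri] at hyz
          rcases hyz with h | h
          · exact Or.inr ⟨a, b, s, v.1, hxa, rfl, hb, Or.inl rfl,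
              Or.inl htg, Relation.TransGen.single h⟩
          · exact Or.inr ⟨a, b, t, v.1, hxa, rfl, hb, Or.inr rfl,
              Or.inl htg, Relation.TransGen.single h⟩
    · -- D2
      cases y' with
      | some u =>
        have hbu : b = u.1 := hyb
        subst hbu
        cases z with
        | some v =>
          simp only [conOri] at hyz
          exact Or.inr ⟨a, γ, α, v.1, hxa, rfl, hγ, hα, hfirst, hlast.tail hyz⟩
        | none =>
          simp only [conOri] at hyz
          rcases hyz with h | h
          · exact Or.inr ⟨a, γ, α, s, hxa, Or.inl rfl, hγ, hα, hfirst, hlast.tail h⟩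
          · exact Or.inr ⟨a, γ, α, t, hxa, Or.inr rfl, hγ, hα, hfirst, hlast.tail h⟩
      | none =>
        exfalso
        have hb : b = s ∨ b = t := hyb
        rcases hα with rfl | rfl <;> rcases hb with rfl | rfl
        · exact hirr _ hlast
        · exact hnost hlast
        · exact hnots hlast
        · exact hirr _ hlast

lemma con_irrefl (hirr : ∀ a, ¬ Relation.TransGen q a a)
    (hnost : ¬ Relation.TransGen q s t) (hnots : ¬ Relation.TransGen q t s)
    (x : Option {v : V // v ≠ s ∧ v ≠ t}) :
    ¬ Relation.TransGen (conOri s t q) x x := by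
  intro h
  rcases con_decomp hirr hnost hnots h with
    ⟨a, b, hxa, hxb, htg⟩ | ⟨a, γ, α, b, hxa, hxb, hγ, hα, hfirst, hlast⟩
  · cases x with
    | some u =>
      have h1 : a = u.1 := hxa
      have h2 : b = u.1 := hxb
      subst h1; subst h2
      exact hirr _ htg
    | none =>
      rcases hxa with rfl | rfl <;> rcases hxb with rfl | rfl
      · exact hirr _ htg
      · exact hnost htg
      · exact hnots htg
      · exact hirr _ htg
  · cases x with
    | some u =>
      have h1 : a = u.1 := hxa
      have h2 : b = u.1 := hxb
      subst h1; subst h2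
      rcases hfirst with hf | ⟨h', _⟩
      · have : Relation.TransGen q α γ := hlast.trans hf
        rcases hγ with rfl | rfl <;> rcases hα with rfl | rfl
        · exact hirr _ this
        · exact hnots this
        · exact hnost this
        · exact hirr _ this
      · exact Option.some_ne_none u h'
    | none =>
      rcases hα with rfl | rfl <;> rcases hxb with rfl | rfl
      · exact hirr _ hlast
      · exact hnost hlast
      · exact hnots hlast
      · exact hirr _ hlast

/-- the contracted orientation of a good orientation without `s↝t` or `t↝s` paths is good -/
lemma con_good (he : G.Adj s t) (hs : s ∈ S) (ht : t ∈ S)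
    (hq : Good (G.deleteEdges {s(s,t)}) S q)
    (hnost : ¬ Relation.TransGen q s t) (hnots : ¬ Relation.TransGen q t s) :
    Good (contractEdge G s t) (optSupp s t S) (conOri s t q) := by
  obtain ⟨h1, h2, h3⟩ := hq
  have hGadj : ∀ a b, q a b → G.Adj a b := by
    intro a b h
    have := (h1 a b h).1
    rw [adj_del_iff] at this
    exact this.1
  refine ⟨?_, ?_, con_irrefl h3 hnost hnots⟩
  · rintro (_ | u) (_ | v) h
    · exact absurd h (by simp [conOri])
    · simp only [conOri] at h
      rcases h with h | h
      · exact ⟨by simp [contractEdge]; exact Or.inl (hGadj _ _ h).symm,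
          mem_optSupp_none, (mem_optSupp_some v).2 (h1 _ _ h).2.2⟩
      · exact ⟨by simp [contractEdge]; exact Or.inr (hGadj _ _ h).symm,
          mem_optSupp_none, (mem_optSupp_some v).2 (h1 _ _ h).2.2⟩
    · simp only [conOri] at h
      rcases h with h | h
      · exact ⟨by simp [contractEdge]; exact Or.inl (hGadj _ _ h),
          (mem_optSupp_some u).2 (h1 _ _ h).2.1, mem_optSupp_none⟩
      · exact ⟨by simp [contractEdge]; exact Or.inr (hGadj _ _ h),
          (mem_optSupp_some u).2 (h1 _ _ h).2.1, mem_optSupp_none⟩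
    · simp only [conOri] at h
      exact ⟨by simp [contractEdge]; exact hGadj _ _ h,
        (mem_optSupp_some u).2 (h1 _ _ h).2.1, (mem_optSupp_some v).2 (h1 _ _ h).2.2⟩
  · rintro (_ | u) (_ | v) hadj hx hy
    · exact absurd hadj (by simp [contractEdge])
    · simp only [contractEdge] at hadj
      have hv : v.1 ∈ S := (mem_optSupp_some v).1 hy
      rcases hadj with h | h
      · have hadj' : (G.deleteEdges {s(s,t)}).Adj s v.1 := by
          rw [adj_del_iff]
          refine ⟨h.symm, ?_⟩
          rintro (⟨_, h2'⟩ | ⟨h1', _⟩)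
          · exact v.2.2 h2'
          · exact he.ne h1'
        rcases h2 s v.1 hadj' hs hv with hh | hh
        · exact Or.inl (by simp only [conOri]; exact Or.inl hh)
        · exact Or.inr (by simp only [conOri]; exact Or.inl hh)
      · have hadj' : (G.deleteEdges {s(s,t)}).Adj t v.1 := by
          rw [adj_del_iff]
          refine ⟨h.symm, ?_⟩
          rintro (⟨h1', _⟩ | ⟨_, h2'⟩)
          · exact he.ne h1'.symm
          · exact v.2.1 h2'
        rcases h2 t v.1 hadj' ht hv with hh | hh
        · exact Or.inl (by simp only [conOri]; exact Or.inr hh)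
        · exact Or.inr (by simp only [conOri]; exact Or.inr hh)
    · simp only [contractEdge] at hadj
      have hu : u.1 ∈ S := (mem_optSupp_some u).1 hx
      rcases hadj with h | h
      · have hadj' : (G.deleteEdges {s(s,t)}).Adj u.1 s := by
          rw [adj_del_iff]
          refine ⟨h, ?_⟩
          rintro (⟨h1', _⟩ | ⟨h1', _⟩)
          · exact u.2.1 h1'
          · exact u.2.2 h1'
        rcases h2 u.1 s hadj' hu hs with hh | hh
        · exact Or.inl (by simp only [conOri]; exact Or.inl hh)
        · exact Or.inr (by simp only [conOri]; exact Or.inl hh)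
      · have hadj' : (G.deleteEdges {s(s,t)}).Adj u.1 t := by
          rw [adj_del_iff]
          refine ⟨h, ?_⟩
          rintro (⟨h1', _⟩ | ⟨h1', _⟩)
          · exact u.2.1 h1'
          · exact u.2.2 h1'
        rcases h2 u.1 t hadj' hu ht with hh | hh
        · exact Or.inl (by simp only [conOri]; exact Or.inr hh)
        · exact Or.inr (by simp only [conOri]; exact Or.inr hh)
    · simp only [contractEdge] at hadj
      have hu : u.1 ∈ S := (mem_optSupp_some u).1 hx
      have hv : v.1 ∈ S := (mem_optSupp_some v).1 hy
      have hadj' : (G.deleteEdges {s(s,t)}).Adj u.1 v.1 := by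
        rw [adj_del_iff]
        refine ⟨hadj, ?_⟩
        rintro (⟨h1', _⟩ | ⟨h1', _⟩)
        · exact u.2.1 h1'
        · exact u.2.2 h1'
      rcases h2 u.1 v.1 hadj' hu hv with hh | hh
      · exact Or.inl (by simp only [conOri]; exact hh)
      · exact Or.inr (by simp only [conOri]; exact hh)

end DelCon2
section DelCon3
variable {V : Type*} [DecidableEq V]
variable {G : SimpleGraph V} {s t : V} {S : Finset V} {q : V → V → Prop}

lemma toOpt_s : toOpt s t s = none := by simp [toOpt]
lemma toOpt_t : toOpt s t t = none := by simp [toOpt]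
lemma toOpt_ne {a : V} (h : a ≠ s ∧ a ≠ t) : toOpt s t a = some ⟨a, h⟩ := by
  simp [toOpt, h]

lemma q_to_con (hq : Good (G.deleteEdges {s(s,t)}) S q) :
    ∀ a b, q a b → conOri s t q (toOpt s t a) (toOpt s t b) := by
  intro a b h
  have hadj := (hq.1 a b h).1
  rw [adj_del_iff] at hadj
  obtain ⟨hGadj, hnp⟩ := hadj
  by_cases ha : a ≠ s ∧ a ≠ t
  · rw [toOpt_ne ha]
    by_cases hb : b ≠ s ∧ b ≠ t
    · rw [toOpt_ne hb]
      simpa only [conOri] using h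
    · push_neg at hb
      by_cases hbs : b = s
      · rw [hbs, toOpt_s]
        exact Or.inl (hbs ▸ h)
      · have hbt : b = t := hb hbs
        rw [hbt, toOpt_t]
        exact Or.inr (hbt ▸ h)
  · push_neg at ha
    by_cases has : a = s
    · rw [has, toOpt_s]
      by_cases hb : b ≠ s ∧ b ≠ t
      · rw [toOpt_ne hb]
        exact Or.inl (has ▸ h)
      · exfalso
        push_neg at hb
        by_cases hbs : b = s
        · exact hGadj.ne (by rw [has, hbs])
        · exact hnp (Or.inl ⟨has, hb hbs⟩)
    · have hat : a = t := ha has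
      rw [hat, toOpt_t]
      by_cases hb : b ≠ s ∧ b ≠ t
      · rw [toOpt_ne hb]
        exact Or.inr (hat ▸ h)
      · exfalso
        push_neg at hb
        by_cases hbs : b = s
        · exact hnp (Or.inr ⟨hat, hbs⟩)
        · exact hGadj.ne (by rw [hat, hb hbs])

lemma con_good_imp (hq : Good (G.deleteEdges {s(s,t)}) S q)
    (hcon : Good (contractEdge G s t) (optSupp s t S) (conOri s t q)) :
    ¬ Relation.TransGen q s t ∧ ¬ Relation.TransGen q t s := by
  constructor
  · intro h
    have := transGen_map (toOpt s t) (q_to_con hq) h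
    rw [toOpt_s, toOpt_t] at this
    exact hcon.2.2 none this
  · intro h
    have := transGen_map (toOpt s t) (q_to_con hq) h
    rw [toOpt_s, toOpt_t] at this
    exact hcon.2.2 none this

lemma exp_good (he : G.Adj s t) (hs : s ∈ S) (ht : t ∈ S)
    {r' : Option {v : V // v ≠ s ∧ v ≠ t} → Option {v : V // v ≠ s ∧ v ≠ t} → Prop}
    (hr' : Good (contractEdge G s t) (optSupp s t S) r') :
    Good (G.deleteEdges {s(s,t)}) S (expOri G s t S r') := by
  refine ⟨?_, ?_, ?_⟩
  · rintro a b ⟨hadj, ha, hb, _⟩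
    exact ⟨hadj, ha, hb⟩
  · intro a b hadj ha hb
    have hmem : ∀ c : V, c ∈ S → toOpt s t c ∈ optSupp s t S := by
      intro c hc
      by_cases h : c ≠ s ∧ c ≠ t
      · rw [toOpt_ne h]; exact (mem_optSupp_some _).2 hc
      · push_neg at h
        by_cases hcs : c = s
        · rw [hcs, toOpt_s]; exact mem_optSupp_none
        · rw [h hcs, toOpt_t]; exact mem_optSupp_none
    have hcadj : (contractEdge G s t).Adj (toOpt s t a) (toOpt s t b) := by
      have hadj' := hadj
      rw [adj_del_iff] at hadj'
      obtain ⟨hGadj, hnp⟩ := hadj'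
      by_cases ha' : a ≠ s ∧ a ≠ t
      · rw [toOpt_ne ha']
        by_cases hb' : b ≠ s ∧ b ≠ t
        · rw [toOpt_ne hb']
          simpa [contractEdge] using hGadj
        · push_neg at hb'
          by_cases hbs : b = s
          · rw [hbs, toOpt_s]
            simp only [contractEdge]
            exact Or.inl (hbs ▸ hGadj)
          · rw [hb' hbs, toOpt_t]
            simp only [contractEdge]
            exact Or.inr (hb' hbs ▸ hGadj)
      · push_neg at ha'
        have hbn : b ≠ s ∧ b ≠ t := by
          constructor
          · intro hbs
            by_cases has : a = s
            · exact hGadj.ne (has.trans hbs.symm)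
            · exact hnp (Or.inr ⟨ha' has, hbs⟩)
          · intro hbt
            by_cases has : a = s
            · exact hnp (Or.inl ⟨has, hbt⟩)
            · exact hGadj.ne ((ha' has).trans hbt.symm)
        rw [toOpt_ne hbn]
        by_cases has : a = s
        · rw [has, toOpt_s]
          simp only [contractEdge]
          exact Or.inl (has ▸ hGadj).symm
        · rw [ha' has, toOpt_t]
          simp only [contractEdge]
          exact Or.inr ((ha' has ▸ hGadj)).symm
    rcases hr'.2.1 _ _ hcadj (hmem a ha) (hmem b hb) with h | h
    · exact Or.inl ⟨hadj, ha, hb, h⟩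
    · exact Or.inr ⟨hadj.symm, hb, ha, h⟩
  · intro a h
    have := transGen_map (toOpt s t) (fun a b hab => hab.2.2.2) h
    exact hr'.2.2 _ this

lemma exp_nopath (he : G.Adj s t)
    {r' : Option {v : V // v ≠ s ∧ v ≠ t} → Option {v : V // v ≠ s ∧ v ≠ t} → Prop}
    (hr' : Good (contractEdge G s t) (optSupp s t S) r') :
    ¬ Relation.TransGen (expOri G s t S r') s t ∧
    ¬ Relation.TransGen (expOri G s t S r') t s := by
  constructor
  · intro h
    have := transGen_map (toOpt s t) (fun a b hab => hab.2.2.2) h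
    rw [toOpt_s, toOpt_t] at this
    exact hr'.2.2 none this
  · intro h
    have := transGen_map (toOpt s t) (fun a b hab => hab.2.2.2) h
    rw [toOpt_s, toOpt_t] at this
    exact hr'.2.2 none this

lemma con_exp (he : G.Adj s t) (hs : s ∈ S) (ht : t ∈ S)
    {r' : Option {v : V // v ≠ s ∧ v ≠ t} → Option {v : V // v ≠ s ∧ v ≠ t} → Prop}
    (hr' : Good (contractEdge G s t) (optSupp s t S) r') :
    conOri s t (expOri G s t S r') = r' := by
  funext x y
  ext
  cases x with
  | some u =>
    cases y with
    | some v =>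
      simp only [conOri]
      constructor
      · rintro ⟨hadj, ha, hb, h⟩
        rw [toOpt_ne u.2, toOpt_ne v.2] at h
        simpa using h
      · intro h
        obtain ⟨hadj, hx, hy⟩ := hr'.1 _ _ h
        simp only [contractEdge] at hadj
        refine ⟨adj_del_iff.2 ⟨hadj, ?_⟩, (mem_optSupp_some u).1 hx,
          (mem_optSupp_some v).1 hy, ?_⟩
        · rintro (⟨h1, _⟩ | ⟨h1, _⟩)
          · exact u.2.1 h1
          · exact u.2.2 h1
        · rw [toOpt_ne u.2, toOpt_ne v.2]
          simpa using h
    | none =>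
      simp only [conOri]
      constructor
      · rintro (⟨hadj, ha, hb, h⟩ | ⟨hadj, ha, hb, h⟩)
        · rw [toOpt_ne u.2, toOpt_s] at h
          exact h
        · rw [toOpt_ne u.2, toOpt_t] at h
          exact h
      · intro h
        obtain ⟨hadj, hx, _⟩ := hr'.1 _ _ h
        simp only [contractEdge] at hadj
        have hu : u.1 ∈ S := (mem_optSupp_some u).1 hx
        rcases hadj with hadj | hadj
        · refine Or.inl ⟨adj_del_iff.2 ⟨hadj, ?_⟩, hu, hs, ?_⟩
          · rintro (⟨h1, _⟩ | ⟨h1, _⟩)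
            · exact u.2.1 h1
            · exact u.2.2 h1
          · rw [toOpt_ne u.2, toOpt_s]; exact h
        · refine Or.inr ⟨adj_del_iff.2 ⟨hadj, ?_⟩, hu, ht, ?_⟩
          · rintro (⟨h1, _⟩ | ⟨h1, _⟩)
            · exact u.2.1 h1
            · exact u.2.2 h1
          · rw [toOpt_ne u.2, toOpt_t]; exact h
  | none =>
    cases y with
    | some v =>
      simp only [conOri]
      constructor
      · rintro (⟨hadj, ha, hb, h⟩ | ⟨hadj, ha, hb, h⟩)
        · rw [toOpt_ne v.2, toOpt_s] at h
          exact h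
        · rw [toOpt_ne v.2, toOpt_t] at h
          exact h
      · intro h
        obtain ⟨hadj, _, hy⟩ := hr'.1 _ _ h
        simp only [contractEdge] at hadj
        have hv : v.1 ∈ S := (mem_optSupp_some v).1 hy
        rcases hadj with hadj | hadj
        · refine Or.inl ⟨adj_del_iff.2 ⟨hadj.symm, ?_⟩, hs, hv, ?_⟩
          · rintro (⟨_, h1⟩ | ⟨h1, _⟩)
            · exact v.2.2 h1
            · exact he.ne h1
          · rw [toOpt_ne v.2, toOpt_s]; exact h
        · refine Or.inr ⟨adj_del_iff.2 ⟨hadj.symm, ?_⟩, ht, hv, ?_⟩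
          · rintro (⟨h1, _⟩ | ⟨_, h1⟩)
            · exact he.ne h1.symm
            · exact v.2.1 h1
          · rw [toOpt_ne v.2, toOpt_t]; exact h
    | none =>
      simp only [conOri]
      constructor
      · exact False.elim
      · intro h
        obtain ⟨hadj, _, _⟩ := hr'.1 _ _ h
        simpa [contractEdge] using hadj

lemma exp_con (he : G.Adj s t) (hs : s ∈ S) (ht : t ∈ S)
    (hq : Good (G.deleteEdges {s(s,t)}) S q)
    (hnost : ¬ Relation.TransGen q s t) (hnots : ¬ Relation.TransGen q t s) :
    expOri G s t S (conOri s t q) = q := by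
  funext a b
  ext
  constructor
  · rintro ⟨hadj, ha, hb, hcon⟩
    have hadj' := hadj
    rw [adj_del_iff] at hadj'
    obtain ⟨hGadj, hnp⟩ := hadj'
    by_cases ha' : a ≠ s ∧ a ≠ t
    · rw [toOpt_ne ha'] at hcon
      by_cases hb' : b ≠ s ∧ b ≠ t
      · rw [toOpt_ne hb'] at hcon
        simpa only [conOri] using hcon
      · push_neg at hb'
        by_cases hbs : b = s
        · rw [hbs] at hcon hadj hb ⊢
          rw [toOpt_s] at hcon
          rcases hcon with h | h
          · exact h
          · -- q a t; need q a s
            rcases hq.2.1 a s hadj ha hb with h' | h'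
            · exact h'
            · exact absurd ((Relation.TransGen.single h').tail h) hnost
        · have hbt : b = t := hb' hbs
          rw [hbt] at hcon hadj hb ⊢
          rw [toOpt_t] at hcon
          rcases hcon with h | h
          · rcases hq.2.1 a t hadj ha hb with h' | h'
            · exact h'
            · exact absurd ((Relation.TransGen.single h').tail h) hnots
          · exact h
    · push_neg at ha'
      by_cases has : a = s
      · rw [has] at hcon hadj ha ⊢
        rw [toOpt_s] at hcon
        by_cases hb' : b ≠ s ∧ b ≠ t
        · rw [toOpt_ne hb'] at hcon
          rcases hcon with h | h
          · exact h
          · rcases hq.2.1 s b hadj ha hb with h' | h'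
            · exact h'
            · exact absurd ((Relation.TransGen.single h).tail h') hnots
        · exfalso
          push_neg at hb'
          by_cases hbs : b = s
          · exact hGadj.ne (has.trans hbs.symm)
          · exact hnp (Or.inl ⟨has, hb' hbs⟩)
      · have hat : a = t := ha' has
        rw [hat] at hcon hadj ha ⊢
        rw [toOpt_t] at hcon
        by_cases hb' : b ≠ s ∧ b ≠ t
        · rw [toOpt_ne hb'] at hcon
          rcases hcon with h | h
          · rcases hq.2.1 t b hadj ha hb with h' | h'
            · exact h'
            · exact absurd ((Relation.TransGen.single h).tail h') hnost
          · exact h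
        · exfalso
          push_neg at hb'
          by_cases hbs : b = s
          · exact hnp (Or.inr ⟨hat, hbs⟩)
          · exact hGadj.ne (hat.trans (hb' hbs).symm)
  · intro h
    exact ⟨(hq.1 a b h).1, (hq.1 a b h).2.1, (hq.1 a b h).2.2, q_to_con hq a b h⟩

end DelCon3
section MainCount
variable {V : Type*} [Fintype V] [DecidableEq V]
variable {G : SimpleGraph V} {s t : V} {S : Finset V} {q : V → V → Prop}

lemma ext_good2 (he : G.Adj s t) (hs : s ∈ S) (ht : t ∈ S)
    (hq : Good (G.deleteEdges {s(s,t)}) S q)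
    (hnost : ¬ Relation.TransGen q s t) : Good G S (extOri t s q) := by
  have hq' : Good (G.deleteEdges {s(t,s)}) S q := by rwa [Sym2.eq_swap]
  exact ext_good he.symm ht hs hq' hnost

lemma good_ext2_imp (he : G.Adj s t) (hgood : Good G S (extOri t s q)) :
    ¬ Relation.TransGen q s t :=
  good_ext1_imp he.symm hgood

lemma not_ext1_ts (he : G.Adj s t) (hq : Good (G.deleteEdges {s(s,t)}) S q) :
    ¬ (extOri s t q) t s := by
  rintro (h | ⟨h1, _⟩)
  · exact (q_not_st hq).2 h
  · exact he.ne h1.symm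

lemma good_del_iff_not_mem {r : V → V → Prop} (hnm : ¬ (s ∈ S ∧ t ∈ S)) :
    Good G S r ↔ Good (G.deleteEdges {s(s,t)}) S r := by
  have hadj : ∀ a b : V, a ∈ S → b ∈ S →
      ((G.deleteEdges {s(s,t)}).Adj a b ↔ G.Adj a b) := by
    intro a b ha hb
    rw [adj_del_iff]
    constructor
    · exact And.left
    · intro h
      refine ⟨h, ?_⟩
      rintro (⟨rfl, rfl⟩ | ⟨rfl, rfl⟩)
      · exact hnm ⟨ha, hb⟩
      · exact hnm ⟨hb, ha⟩
  constructor
  · rintro ⟨h1, h2, h3⟩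
    refine ⟨?_, ?_, h3⟩
    · intro a b hab
      obtain ⟨had, ha, hb⟩ := h1 a b hab
      exact ⟨(hadj a b ha hb).2 had, ha, hb⟩
    · intro a b hab ha hb
      exact h2 a b ((hadj a b ha hb).1 hab) ha hb
  · rintro ⟨h1, h2, h3⟩
    refine ⟨?_, ?_, h3⟩
    · intro a b hab
      obtain ⟨had, ha, hb⟩ := h1 a b hab
      exact ⟨(hadj a b ha hb).1 had, ha, hb⟩
    · intro a b hab ha hb
      exact h2 a b ((hadj a b ha hb).2 hab) ha hb

lemma NO_eq_of_not_mem (hnm : ¬ (s ∈ S ∧ t ∈ S)) :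
    NO G S = NO (G.deleteEdges {s(s,t)}) S :=
  Nat.card_congr (Equiv.subtypeEquivRight (fun r => good_del_iff_not_mem hnm))

lemma NO_rec (he : G.Adj s t) (hs : s ∈ S) (ht : t ∈ S) :
    NO G S = NO (G.deleteEdges {s(s,t)}) S +
      NO (contractEdge G s t) (optSupp s t S) := by
  classical
  rw [NO, NO, NO, ← Nat.card_sum]
  apply Nat.card_congr
  set G' := G.deleteEdges {s(s,t)} with hG'
  -- forward map
  have hFaux : ∀ r : {r : V → V → Prop // Good G S r},
      Good G' S (delOri s t r.1) := fun r => good_del r.2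
  let F : {r : V → V → Prop // Good G S r} →
      {q : V → V → Prop // Good G' S q} ⊕
      {r' : _ → _ → Prop // Good (contractEdge G s t) (optSupp s t S) r'} :=
    fun r =>
      if hts : r.1 t s then
        (if hcon : Good (contractEdge G s t) (optSupp s t S)
            (conOri s t (delOri s t r.1)) then
          Sum.inr ⟨conOri s t (delOri s t r.1), hcon⟩
        else Sum.inl ⟨delOri s t r.1, hFaux r⟩)
      else Sum.inl ⟨delOri s t r.1, hFaux r⟩
  let Ginv : ({q : V → V → Prop // Good G' S q} ⊕
      {r' : _ → _ → Prop // Good (contractEdge G s t) (optSupp s t S) r'}) →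
      {r : V → V → Prop // Good G S r} :=
    fun x =>
      match x with
      | Sum.inl q =>
        if h : ¬ Relation.TransGen q.1 t s then
          ⟨extOri s t q.1, ext_good he hs ht q.2 h⟩
        else
          ⟨extOri t s q.1, ext_good2 he hs ht q.2
            (fun hst' => q.2.2.2 s (hst'.trans (not_not.1 h)))⟩
      | Sum.inr r' =>
        ⟨extOri t s (expOri G s t S r'.1),
          ext_good2 he hs ht (exp_good he hs ht r'.2) (exp_nopath he r'.2).1⟩
  refine ⟨F, Ginv, ?_, ?_⟩
  · -- left inverse
    intro r
    obtain ⟨r, hr⟩ := r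
    by_cases hts : r t s
    · have hnst : ¬ r s t := fun h => good_not_both hr ⟨h, hts⟩
      have hr2 : extOri t s (delOri s t r) = r := ext2_del_eq hr hts hnst
      by_cases hcon : Good (contractEdge G s t) (optSupp s t S)
          (conOri s t (delOri s t r))
      · have hF : F ⟨r, hr⟩ = Sum.inr ⟨conOri s t (delOri s t r), hcon⟩ := by
          show (if hts : r t s then _ else _) = _
          rw [dif_pos hts, dif_pos hcon]
        rw [hF]
        show (⟨extOri t s (expOri G s t S (conOri s t (delOri s t r))), _⟩ :
          {r : V → V → Prop // Good G S r}) = ⟨r, hr⟩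
        have hq := good_del (s := s) (t := t) hr
        obtain ⟨hnost, hnots⟩ := con_good_imp hq hcon
        apply Subtype.ext
        simp only
        rw [exp_con he hs ht hq hnost hnots, hr2]
      · have hF : F ⟨r, hr⟩ = Sum.inl ⟨delOri s t r, good_del hr⟩ := by
          show (if hts : r t s then _ else _) = _
          rw [dif_pos hts, dif_neg hcon]
        rw [hF]
        have hTG : ¬ ¬ Relation.TransGen (delOri s t r) t s := by
          intro hn
          have hnost : ¬ Relation.TransGen (delOri s t r) s t :=
            good_ext2_imp he (hr2 ▸ hr)
          exact hcon (con_good he hs ht (good_del hr) hnost hn)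
        show (if h : ¬ Relation.TransGen (delOri s t r) t s then _ else _) = _
        rw [dif_neg (not_not.2 (not_not.1 hTG))]
        exact Subtype.ext hr2
    · have hst' : r s t := (good_r_st_or_ts hr he hs ht).resolve_right hts
      have hr1 : extOri s t (delOri s t r) = r := ext1_del_eq hr hst' hts
      have hF : F ⟨r, hr⟩ = Sum.inl ⟨delOri s t r, good_del hr⟩ := by
        show (if hts : r t s then _ else _) = _
        rw [dif_neg hts]
      rw [hF]
      have hTG : ¬ Relation.TransGen (delOri s t r) t s :=
        good_ext1_imp he (hr1 ▸ hr)
      show (if h : ¬ Relation.TransGen (delOri s t r) t s then _ else _) = _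
      rw [dif_pos hTG]
      exact Subtype.ext hr1
  · -- right inverse
    rintro (⟨q, hq⟩ | ⟨r', hr'⟩)
    · by_cases h : ¬ Relation.TransGen q t s
      · have hG : Ginv (Sum.inl ⟨q, hq⟩) = ⟨extOri s t q, ext_good he hs ht hq h⟩ := by
          show (if h' : ¬ Relation.TransGen q t s then _ else _) = _
          rw [dif_pos h]
        rw [hG]
        have hts : ¬ (extOri s t q) t s := not_ext1_ts he hq
        show (if hts' : (extOri s t q) t s then _ else _) = _
        rw [dif_neg hts]
        exact congrArg Sum.inl (Subtype.ext (del_ext1 hq))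
      · have hG : Ginv (Sum.inl ⟨q, hq⟩) = ⟨extOri t s q, ext_good2 he hs ht hq
            (fun hst' => hq.2.2 s (hst'.trans (not_not.1 h)))⟩ := by
          show (if h' : ¬ Relation.TransGen q t s then _ else _) = _
          rw [dif_neg h]
        rw [hG]
        have hts : (extOri t s q) t s := Or.inr ⟨rfl, rfl⟩
        have hdel : delOri s t (extOri t s q) = q := del_ext2 hq
        have hcon : ¬ Good (contractEdge G s t) (optSupp s t S)
            (conOri s t (delOri s t (extOri t s q))) := by
          rw [hdel]
          intro hcon
          exact h (con_good_imp hq hcon).2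
        show (if hts' : (extOri t s q) t s then _ else _) = _
        rw [dif_pos hts, dif_neg hcon]
        exact congrArg Sum.inl (Subtype.ext hdel)
    · have hexp := exp_good he hs ht hr'
      obtain ⟨hnost, hnots⟩ := exp_nopath he hr'
      have hG : Ginv (Sum.inr ⟨r', hr'⟩) = ⟨extOri t s (expOri G s t S r'),
          ext_good2 he hs ht hexp hnost⟩ := rfl
      rw [hG]
      have hts : (extOri t s (expOri G s t S r')) t s := Or.inr ⟨rfl, rfl⟩
      have hdel : delOri s t (extOri t s (expOri G s t S r')) = expOri G s t S r' :=
        del_ext2 hexp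
      have hconeq : conOri s t (delOri s t (extOri t s (expOri G s t S r'))) = r' := by
        rw [hdel, con_exp he hs ht hr']
      have hcon : Good (contractEdge G s t) (optSupp s t S)
          (conOri s t (delOri s t (extOri t s (expOri G s t S r')))) := by
        rw [hconeq]; exact hr'
      show (if hts' : (extOri t s (expOri G s t S r')) t s then _ else _) = _
      rw [dif_pos hts, dif_pos hcon]
      exact congrArg Sum.inr (Subtype.ext hconeq)

end MainCount
section Reindex
variable {V : Type*} [Fintype V] [DecidableEq V]
variable {G : SimpleGraph V} {s t : V}

/-- push an orientation up along `some` -/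
def oup (s t : V) (r : {v : V // v ≠ s ∧ v ≠ t} → {v : V // v ≠ s ∧ v ≠ t} → Prop) :
    Option {v : V // v ≠ s ∧ v ≠ t} → Option {v : V // v ≠ s ∧ v ≠ t} → Prop :=
  fun x y => ∃ a b, x = some a ∧ y = some b ∧ r a b

def odown (s t : V)
    (r' : Option {v : V // v ≠ s ∧ v ≠ t} → Option {v : V // v ≠ s ∧ v ≠ t} → Prop) :
    {v : V // v ≠ s ∧ v ≠ t} → {v : V // v ≠ s ∧ v ≠ t} → Prop :=
  fun a b => r' (some a) (some b)

def someEmb (s t : V) : {v : V // v ≠ s ∧ v ≠ t} ↪ Option {v : V // v ≠ s ∧ v ≠ t} :=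
  ⟨some, Option.some_injective _⟩

lemma tg_oup {r : {v : V // v ≠ s ∧ v ≠ t} → {v : V // v ≠ s ∧ v ≠ t} → Prop}
    {x y : Option {v : V // v ≠ s ∧ v ≠ t}}
    (h : Relation.TransGen (oup s t r) x y) :
    ∃ a b, x = some a ∧ y = some b ∧ Relation.TransGen r a b := by
  induction h with
  | single hs =>
    obtain ⟨a, b, rfl, rfl, hab⟩ := hs
    exact ⟨a, b, rfl, rfl, Relation.TransGen.single hab⟩
  | tail _ hs ih =>
    obtain ⟨a, b, rfl, rfl, htg⟩ := ih
    obtain ⟨a', b', ha', rfl, hab⟩ := hs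
    have : a' = b := by injection ha'.symm
    subst this
    exact ⟨a, b', rfl, rfl, htg.tail hab⟩

lemma good_oup {T : Finset {v : V // v ≠ s ∧ v ≠ t}}
    {r : {v : V // v ≠ s ∧ v ≠ t} → {v : V // v ≠ s ∧ v ≠ t} → Prop}
    (h : Good (G.comap (fun v : {v : V // v ≠ s ∧ v ≠ t} => (v : V))) T r) :
    Good (contractEdge G s t) (T.map (someEmb s t)) (oup s t r) := by
  obtain ⟨h1, h2, h3⟩ := h
  refine ⟨?_, ?_, ?_⟩
  · rintro x y ⟨a, b, rfl, rfl, hab⟩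
    obtain ⟨hadj, ha, hb⟩ := h1 a b hab
    exact ⟨by simpa [contractEdge] using hadj,
      Finset.mem_map_of_mem (someEmb s t) ha, Finset.mem_map_of_mem (someEmb s t) hb⟩
  · intro x y hadj hx hy
    simp only [Finset.mem_map, someEmb, Function.Embedding.coeFn_mk] at hx hy
    obtain ⟨a, ha, rfl⟩ := hx
    obtain ⟨b, hb, rfl⟩ := hy
    simp only [contractEdge] at hadj
    rcases h2 a b hadj ha hb with h | h
    · exact Or.inl ⟨a, b, rfl, rfl, h⟩
    · exact Or.inr ⟨b, a, rfl, rfl, h⟩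
  · intro x h
    obtain ⟨a, b, rfl, hab, htg⟩ := tg_oup h
    have : a = b := by injection hab
    exact h3 a (this ▸ htg)

lemma good_odown {T : Finset {v : V // v ≠ s ∧ v ≠ t}}
    {r' : Option {v : V // v ≠ s ∧ v ≠ t} → Option {v : V // v ≠ s ∧ v ≠ t} → Prop}
    (h : Good (contractEdge G s t) (T.map (someEmb s t)) r') :
    Good (G.comap (fun v : {v : V // v ≠ s ∧ v ≠ t} => (v : V))) T (odown s t r') := by
  obtain ⟨h1, h2, h3⟩ := h
  refine ⟨?_, ?_, ?_⟩
  · intro a b hab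
    obtain ⟨hadj, ha, hb⟩ := h1 _ _ hab
    simp only [Finset.mem_map, someEmb, Function.Embedding.coeFn_mk] at ha hb
    obtain ⟨a', ha', haa⟩ := ha
    obtain ⟨b', hb', hbb⟩ := hb
    have : a' = a := by injection haa
    subst this
    have : b' = b := by injection hbb
    subst this
    simp only [contractEdge] at hadj
    exact ⟨hadj, ha', hb'⟩
  · intro a b hadj ha hb
    have hadj' : (contractEdge G s t).Adj (some a) (some b) := by
      simpa [contractEdge] using hadj
    rcases h2 (some a) (some b) hadj'
        (Finset.mem_map_of_mem (someEmb s t) ha)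
        (Finset.mem_map_of_mem (someEmb s t) hb) with h | h
    · exact Or.inl h
    · exact Or.inr h
  · intro a h
    exact h3 (some a) (transGen_map some (fun _ _ hh => hh) h)

lemma oup_odown {T : Finset {v : V // v ≠ s ∧ v ≠ t}}
    {r' : Option {v : V // v ≠ s ∧ v ≠ t} → Option {v : V // v ≠ s ∧ v ≠ t} → Prop}
    (h : Good (contractEdge G s t) (T.map (someEmb s t)) r') :
    oup s t (odown s t r') = r' := by
  funext x y
  ext
  constructor
  · rintro ⟨a, b, rfl, rfl, hab⟩
    exact hab
  · intro hxy
    obtain ⟨_, hx, hy⟩ := h.1 _ _ hxy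
    simp only [Finset.mem_map, someEmb, Function.Embedding.coeFn_mk] at hx hy
    obtain ⟨a, _, rfl⟩ := hx
    obtain ⟨b, _, rfl⟩ := hy
    exact ⟨a, b, rfl, rfl, hxy⟩

lemma odown_oup {r : {v : V // v ≠ s ∧ v ≠ t} → {v : V // v ≠ s ∧ v ≠ t} → Prop} :
    odown s t (oup s t r) = r := by
  funext a b
  ext
  constructor
  · rintro ⟨a', b', ha, hb, hab⟩
    have h1 : a' = a := by injection ha.symm
    have h2 : b' = b := by injection hb.symm
    subst h1; subst h2
    exact hab
  · intro h
    exact ⟨a, b, rfl, rfl, h⟩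

lemma NO_con_map (T : Finset {v : V // v ≠ s ∧ v ≠ t}) :
    NO (contractEdge G s t) (T.map (someEmb s t)) =
    NO (G.comap (fun v : {v : V // v ≠ s ∧ v ≠ t} => (v : V))) T := by
  rw [NO, NO]
  apply Nat.card_congr
  refine ⟨fun r' => ⟨odown s t r'.1, good_odown r'.2⟩,
    fun r => ⟨oup s t r.1, good_oup r.2⟩, ?_, ?_⟩
  · intro r'
    exact Subtype.ext (oup_odown r'.2)
  · intro r
    exact Subtype.ext odown_oup
end Reindex
section Assembly
variable {V : Type*} [Fintype V] [DecidableEq V]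
variable {G : SimpleGraph V} {s t : V}

def optVal (s t : V) : Option {v : V // v ≠ s ∧ v ≠ t} → V :=
  fun x => x.elim s (·.1)

lemma filter_ne_eq_erase (S : Finset V) (hst : s ≠ t) :
    S.filter (fun v => v ≠ s ∧ v ≠ t) = (S.erase s).erase t := by
  ext v
  simp only [Finset.mem_filter, Finset.mem_erase]
  tauto

lemma optSupp_card {S : Finset V} (hs : s ∈ S) (ht : t ∈ S) (hst : s ≠ t) :
    (optSupp s t S).card + 1 = S.card := by
  rw [optSupp, Finset.card_insert_of_notMem (by simp), Finset.card_map,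
    Finset.card_subtype, filter_ne_eq_erase S hst]
  have h1 : ((S.erase s).erase t).card + 1 = (S.erase s).card :=
    Finset.card_erase_add_one (Finset.mem_erase.2 ⟨Ne.symm hst, ht⟩)
  have h2 : (S.erase s).card + 1 = S.card := Finset.card_erase_add_one hs
  omega

lemma ofT_optSupp {S : Finset V} (hs : s ∈ S) (ht : t ∈ S) :
    insert t ((optSupp s t S).image (optVal s t)) = S := by
  ext v
  simp only [Finset.mem_insert, Finset.mem_image]
  constructor
  · rintro (rfl | ⟨x, hx, rfl⟩)
    · exact ht
    · cases x with
      | none => exact hs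
      | some u => exact (mem_optSupp_some u).1 hx
  · intro hv
    by_cases hvt : v = t
    · exact Or.inl hvt
    by_cases hvs : v = s
    · exact Or.inr ⟨none, mem_optSupp_none, hvs.symm⟩
    · exact Or.inr ⟨some ⟨v, hvs, hvt⟩, (mem_optSupp_some _).2 hv, rfl⟩

lemma optSupp_ofT {T : Finset (Option {v : V // v ≠ s ∧ v ≠ t})} (hn : none ∈ T) :
    optSupp s t (insert t (T.image (optVal s t))) = T := by
  ext x
  cases x with
  | none => simp [mem_optSupp_none, hn]
  | some u =>
    rw [mem_optSupp_some]
    simp only [Finset.mem_insert, Finset.mem_image]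
    constructor
    · rintro (h | ⟨y, hy, hvy⟩)
      · exact absurd h u.2.2
      · cases y with
        | none => exact absurd hvy.symm u.2.1
        | some w =>
          have : w = u := Subtype.ext hvy
          exact this ▸ hy
    · intro h
      exact Or.inr ⟨some u, h, rfl⟩

lemma sum_none_side (f : Finset (Option {v : V // v ≠ s ∧ v ≠ t}) → ℤ) (hst : s ≠ t) :
    ∑ S ∈ Finset.univ.filter (fun S : Finset V => s ∈ S ∧ t ∈ S), f (optSupp s t S) =
    ∑ T ∈ Finset.univ.filter
      (fun T : Finset (Option {v : V // v ≠ s ∧ v ≠ t}) => none ∈ T), f T := by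
  refine Finset.sum_bij' (fun S _ => optSupp s t S)
    (fun T _ => insert t (T.image (optVal s t))) ?_ ?_ ?_ ?_ ?_
  · intro S hS
    simp only [Finset.mem_filter, Finset.mem_univ, true_and]
    exact mem_optSupp_none
  · intro T hT
    simp only [Finset.mem_filter, Finset.mem_univ, true_and] at hT ⊢
    constructor
    · exact Finset.mem_insert_of_mem (Finset.mem_image.2 ⟨none, hT, rfl⟩)
    · exact Finset.mem_insert_self _ _
  · intro S hS
    simp only [Finset.mem_filter, Finset.mem_univ, true_and] at hS
    exact ofT_optSupp hS.1 hS.2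
  · intro T hT
    simp only [Finset.mem_filter, Finset.mem_univ, true_and] at hT
    exact optSupp_ofT hT
  · intro S _
    rfl

lemma sum_some_side (f : Finset (Option {v : V // v ≠ s ∧ v ≠ t}) → ℤ) :
    ∑ T ∈ Finset.univ.filter
      (fun T : Finset (Option {v : V // v ≠ s ∧ v ≠ t}) => ¬ none ∈ T), f T =
    ∑ T₀ : Finset {v : V // v ≠ s ∧ v ≠ t}, f (T₀.map (someEmb s t)) := by
  refine (Finset.sum_bij' (fun T₀ _ => T₀.map (someEmb s t))
    (fun T _ => Finset.univ.filter (fun u => some u ∈ T)) ?_ ?_ ?_ ?_ ?_).symm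
  · intro T₀ _
    simp only [Finset.mem_filter, Finset.mem_univ, true_and]
    intro h
    obtain ⟨u, _, hu⟩ := Finset.mem_map.1 h
    exact Option.some_ne_none u hu
  · intro T _
    exact Finset.mem_univ _
  · intro T₀ _
    ext u
    simp only [Finset.mem_filter, Finset.mem_univ, true_and]
    exact Finset.mem_map' _
  · intro T hT
    simp only [Finset.mem_filter, Finset.mem_univ, true_and] at hT
    ext x
    cases x with
    | none =>
      simp only [Finset.mem_map]
      constructor
      · rintro ⟨u, _, hu⟩
        exact absurd hu (Option.some_ne_none u)
      · intro h
        exact absurd h hT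
    | some u =>
      show (someEmb s t) u ∈ Finset.map (someEmb s t) _ ↔ _
      rw [Finset.mem_map' (someEmb s t)]
      simp
  · intro T₀ _
    rfl

end Assembly
theorem booleanNumber_edge_recursion' {V : Type*} [Fintype V] [DecidableEq V]
    (G : SimpleGraph V) (s t : V) (he : G.Adj s t) :
    booleanNumber G =
      booleanNumber (G.deleteEdges {s(s, t)}) +
      booleanNumber (contractEdge G s t) +
      booleanNumber (G.comap (fun v : {v : V // v ≠ s ∧ v ≠ t} => (v : V))) := by
  classical
  have hst : s ≠ t := he.ne
  set m := Fintype.card {v : V // v ≠ s ∧ v ≠ t} with hm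
  have hcardU : m + 2 = Fintype.card V := by
    rw [hm, Fintype.card_subtype, filter_ne_eq_erase _ hst]
    have h1 := Finset.card_erase_add_one
      (Finset.mem_erase.2 ⟨Ne.symm hst, Finset.mem_univ (α := V) t⟩)
    have h2 := Finset.card_erase_add_one (Finset.mem_univ (α := V) s)
    rw [← Finset.card_univ]
    omega
  have hcardW : Fintype.card (Option {v : V // v ≠ s ∧ v ≠ t}) = m + 1 :=
    Fintype.card_option
  set A := ∑ S : Finset V, (-1 : ℤ) ^ S.card * (NO G S : ℤ) with hA
  set B := ∑ S : Finset V, (-1 : ℤ) ^ S.card * (NO (G.deleteEdges {s(s,t)}) S : ℤ) with hB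
  set D := ∑ T : Finset (Option {v : V // v ≠ s ∧ v ≠ t}),
    (-1 : ℤ) ^ T.card * (NO (contractEdge G s t) T : ℤ) with hD
  set E := ∑ T₀ : Finset {v : V // v ≠ s ∧ v ≠ t}, (-1 : ℤ) ^ T₀.card *
    (NO (G.comap (fun v : {v : V // v ≠ s ∧ v ≠ t} => (v : V))) T₀ : ℤ) with hE
  set C := ∑ S ∈ Finset.univ.filter (fun S : Finset V => s ∈ S ∧ t ∈ S),
    (-1 : ℤ) ^ S.card * (NO (contractEdge G s t) (optSupp s t S) : ℤ) with hC
  -- A = B + C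
  have hABC : A = B + C := by
    rw [hA, hB, ← Finset.sum_filter_add_sum_filter_not Finset.univ
      (fun S : Finset V => s ∈ S ∧ t ∈ S)
      (fun S => (-1 : ℤ) ^ S.card * (NO G S : ℤ)),
      ← Finset.sum_filter_add_sum_filter_not Finset.univ
      (fun S : Finset V => s ∈ S ∧ t ∈ S)
      (fun S => (-1 : ℤ) ^ S.card * (NO (G.deleteEdges {s(s,t)}) S : ℤ))]
    have hP : ∀ S ∈ Finset.univ.filter (fun S : Finset V => s ∈ S ∧ t ∈ S),
        (-1 : ℤ) ^ S.card * (NO G S : ℤ) =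
        (-1 : ℤ) ^ S.card * (NO (G.deleteEdges {s(s,t)}) S : ℤ) +
        (-1 : ℤ) ^ S.card * (NO (contractEdge G s t) (optSupp s t S) : ℤ) := by
      intro S hS
      simp only [Finset.mem_filter] at hS
      rw [NO_rec he hS.2.1 hS.2.2]
      push_cast
      ring
    have hNP : ∀ S ∈ Finset.univ.filter (fun S : Finset V => ¬ (s ∈ S ∧ t ∈ S)),
        (-1 : ℤ) ^ S.card * (NO G S : ℤ) =
        (-1 : ℤ) ^ S.card * (NO (G.deleteEdges {s(s,t)}) S : ℤ) := by
      intro S hS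
      simp only [Finset.mem_filter] at hS
      rw [NO_eq_of_not_mem hS.2]
    rw [Finset.sum_congr rfl hP, Finset.sum_congr rfl hNP, Finset.sum_add_distrib, hC]
    ring
  -- D = -C + E
  have hDCE : D = -C + E := by
    rw [hD, ← Finset.sum_filter_add_sum_filter_not Finset.univ
      (fun T : Finset (Option {v : V // v ≠ s ∧ v ≠ t}) => none ∈ T)
      (fun T => (-1 : ℤ) ^ T.card * (NO (contractEdge G s t) T : ℤ))]
    have h1 : ∑ T ∈ Finset.univ.filter
        (fun T : Finset (Option {v : V // v ≠ s ∧ v ≠ t}) => none ∈ T),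
        (-1 : ℤ) ^ T.card * (NO (contractEdge G s t) T : ℤ) = -C := by
      rw [← sum_none_side (fun T => (-1 : ℤ) ^ T.card * (NO (contractEdge G s t) T : ℤ)) hst,
        hC, ← Finset.sum_neg_distrib]
      refine Finset.sum_congr rfl ?_
      intro S hS
      simp only [Finset.mem_filter] at hS
      have hcard := optSupp_card hS.2.1 hS.2.2 hst
      have : ((-1 : ℤ)) ^ S.card = -(-1 : ℤ) ^ (optSupp s t S).card := by
        rw [← hcard, pow_succ]
        ring
      rw [this]
      ring
    have h2 : ∑ T ∈ Finset.univ.filter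
        (fun T : Finset (Option {v : V // v ≠ s ∧ v ≠ t}) => ¬ none ∈ T),
        (-1 : ℤ) ^ T.card * (NO (contractEdge G s t) T : ℤ) = E := by
      rw [sum_some_side (fun T => (-1 : ℤ) ^ T.card * (NO (contractEdge G s t) T : ℤ)), hE]
      refine Finset.sum_congr rfl ?_
      intro T₀ _
      rw [Finset.card_map, NO_con_map]
    rw [h1, h2]
  -- put everything together
  have e1 : booleanNumber G = (-1 : ℤ) ^ (m + 2) * A := by
    rw [booleanNumber_eq_sum, hcardU, hA]
  have e2 : booleanNumber (G.deleteEdges {s(s,t)}) = (-1 : ℤ) ^ (m + 2) * B := by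
    rw [booleanNumber_eq_sum, hcardU, hB]
  have e3 : booleanNumber (contractEdge G s t) = (-1 : ℤ) ^ (m + 1) * D := by
    rw [booleanNumber_eq_sum, hcardW, hD]
  have e4 : booleanNumber (G.comap (fun v : {v : V // v ≠ s ∧ v ≠ t} => (v : V))) =
      (-1 : ℤ) ^ m * E := by
    rw [booleanNumber_eq_sum, hE, hm]
  rw [e1, e2, e3, e4, hABC, hDCE]
  ring

/-- **Edge recursion for the boolean number.**  For any edge `e = {s,t}` of a finite simple
graph `G`, one has `β(G) = β(G − e) + β(G/e) + β(G − [e])`, where `G − e` is the deletion,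
`G/e` the simple contraction, and `G − [e]` the extraction (the induced subgraph on the
complement of `{s,t}`). -/
theorem booleanNumber_edge_recursion {V : Type*} [Fintype V] [DecidableEq V]
    (G : SimpleGraph V) (s t : V) (he : G.Adj s t) :
    booleanNumber G =
      booleanNumber (G.deleteEdges {s(s, t)}) +
      booleanNumber (contractEdge G s t) +
      booleanNumber (G.comap (fun v : {v : V // v ≠ s ∧ v ≠ t} => (v : V))) := by
  exact booleanNumber_edge_recursion' G s t he
end

section
/- Let G be a finite simple graph and let σ ∈ 𝔅(G) be the commutation-equivalence class of an injective word of length k. Then the lower order ideal {τ ∈ 𝔅(G) : τ ≤ σ} is order-isomorphic to the lattice of all subsets of a k-element set; in particular 𝔅(G) is a simplicial poset. -/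
/-- The setoid of injective words (lists of pairwise distinct vertices) on `G`,
up to commutation equivalence. -/
def wordSetoid {V : Type*} (G : SimpleGraph V) : Setoid {w : List V // w.Nodup} :=
  Setoid.comap Subtype.val (commSetoid G)

/-- The boolean ideal of `G`: commutation classes of injective words on `G`. -/
def BIdeal {V : Type*} (G : SimpleGraph V) := Quotient (wordSetoid G)

/-- The commutation class of an injective word. -/
def mkClass {V : Type*} (G : SimpleGraph V) (w : {w : List V // w.Nodup}) : BIdeal G :=
  Quotient.mk (wordSetoid G) w

/-- The subword order on the boolean ideal: `σ ≤ τ` iff some representative of `σ`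
is a subsequence of some representative of `τ`. -/
def bLE {V : Type*} (G : SimpleGraph V) (σ τ : BIdeal G) : Prop :=
  ∃ a b : {w : List V // w.Nodup}, mkClass G a = σ ∧ mkClass G b = τ ∧ a.1.Sublist b.1


section Aux

open Relation List

variable {V : Type*} {G : SimpleGraph V}

theorem CommStep.symm' {u v : List V} (h : CommStep G u v) : CommStep G v u := by
  obtain ⟨a, b, p, s, hab, rfl, rfl⟩ := h
  exact ⟨b, a, p, s, fun h => hab (h.symm), rfl, rfl⟩

theorem CommStep.perm {u v : List V} (h : CommStep G u v) : u.Perm v := by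
  obtain ⟨a, b, p, s, hab, rfl, rfl⟩ := h
  exact (List.perm_append_left_iff p).2 (List.Perm.swap b a s)

theorem eqv_perm {u v : List V} (h : EqvGen (CommStep G) u v) : u.Perm v := by
  induction h with
  | rel _ _ h => exact h.perm
  | refl _ => exact .refl _
  | symm _ _ _ ih => exact ih.symm
  | trans _ _ _ _ _ ih1 ih2 => exact ih1.trans ih2

theorem pair_total {a b : V} {t : List V} (ha : a ∈ t) (hb : b ∈ t) (hne : a ≠ b) :
    [a, b].Sublist t ∨ [b, a].Sublist t := by
  induction t with
  | nil => simp at ha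
  | cons c t ih =>
    rcases eq_or_ne a c with rfl | h1
    · exact Or.inl (List.cons_sublist_cons.2 (List.singleton_sublist.2
        (by simpa [hne.symm] using hb)))
    rcases eq_or_ne b c with rfl | h2
    · exact Or.inr (List.cons_sublist_cons.2 (List.singleton_sublist.2
        (by simpa [hne] using ha)))
    · rcases ih (by simpa [h1] using ha) (by simpa [h2] using hb) with h | h
      · exact Or.inl (h.cons c)
      · exact Or.inr (h.cons c)

theorem pair_asymm {a b : V} {t : List V} (ht : t.Nodup) (h1 : [a, b].Sublist t)
    (h2 : [b, a].Sublist t) : a = b := by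
  induction t with
  | nil => simp at h1
  | cons c t ih =>
    have hct : c ∉ t := (List.nodup_cons.1 ht).1
    cases h1 with
    | cons _ h1 =>
      cases h2 with
      | cons _ h2 => exact ih (List.nodup_cons.1 ht).2 h1 h2
      | cons_cons _ h2 =>
        -- b = c, [a] <+ t ; also [a,b] <+ t so b ∈ t
        exact absurd (h1.subset (by simp)) hct
    | cons_cons _ h1 =>
      -- a = c, [b] <+ t
      cases h2 with
      | cons _ h2 => exact absurd (h2.subset (by simp)) hct
      | cons_cons _ h2 => rfl

theorem sublist_of_cons_of_not_mem {x : V} {l s : List V} (h : l.Sublist (x :: s))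
    (hx : x ∉ l) : l.Sublist s := by
  cases h with
  | cons _ h => exact h
  | cons_cons _ h => exact absurd (by simp) hx

theorem CommStep.pair_sublist {u v : List V} (h : CommStep G u v) {a b : V}
    (hab : G.Adj a b) (hs : [a, b].Sublist u) : [a, b].Sublist v := by
  obtain ⟨x, y, p, s, hxy, rfl, rfl⟩ := h
  rw [List.sublist_append_iff] at hs ⊢
  obtain ⟨l1, l2, he, h1, h2⟩ := hs
  refine ⟨l1, l2, he, h1, ?_⟩
  rcases l1 with _ | ⟨c, _ | ⟨d, l1⟩⟩
  · simp only [List.nil_append] at he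
    subst he
    cases h2 with
    | cons _ h2 =>
      cases h2 with
      | cons _ h2 => exact (h2.cons x).cons y
      | cons_cons _ h2 => exact Sublist.cons₂ _ (h2.cons x)
    | cons_cons _ h2 =>
      cases h2 with
      | cons _ h2 => exact (Sublist.cons₂ _ h2).cons y
      | cons_cons _ h2 => exact absurd hab hxy
  · simp only [List.cons_append, List.nil_append] at he
    injection he with h3 h4
    subst h3; subst h4
    have : b ∈ y :: x :: s := by
      have := List.singleton_sublist.1 h2
      simp only [List.mem_cons] at this ⊢
      tauto
    exact List.singleton_sublist.2 this
  · simp only [List.cons_append] at he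
    injection he with h3 h4
    injection h4 with h5 h6
    have : l2 = [] := (List.append_eq_nil_iff.1 h6.symm).2
    subst this
    exact List.nil_sublist _

theorem eqv_pair_sublist {u v : List V} (h : EqvGen (CommStep G) u v) {a b : V}
    (hab : G.Adj a b) : [a, b].Sublist u ↔ [a, b].Sublist v := by
  induction h with
  | rel _ _ h => exact ⟨h.pair_sublist hab, h.symm'.pair_sublist hab⟩
  | refl _ => exact Iff.rfl
  | symm _ _ _ ih => exact ih.symm
  | trans _ _ _ _ _ ih1 ih2 => exact ih1.trans ih2

theorem eqvGen_cons {u v : List V} (x : V) (h : EqvGen (CommStep G) u v) :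
    EqvGen (CommStep G) (x :: u) (x :: v) := by
  induction h with
  | rel c d h =>
    obtain ⟨a, b, p, s, hab, rfl, rfl⟩ := h
    exact .rel _ _ ⟨a, b, x :: p, s, hab, rfl, rfl⟩
  | refl c => exact .refl _
  | symm c d _ ih => exact .symm _ _ ih
  | trans c d e _ _ ih1 ih2 => exact .trans _ _ _ ih1 ih2

theorem bubble {x : V} (p s : List V) (h : ∀ y ∈ p, ¬ G.Adj x y) :
    EqvGen (CommStep G) (p ++ x :: s) (x :: (p ++ s)) := by
  induction p with
  | nil => exact .refl _
  | cons c p ih =>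
    have h1 : EqvGen (CommStep G) (c :: (p ++ x :: s)) (c :: x :: (p ++ s)) :=
      eqvGen_cons c (ih (fun y hy => h y (by simp [hy])))
    refine .trans _ _ _ h1 (.rel _ _ ?_)
    exact ⟨c, x, [], p ++ s, fun hadj => h c (by simp) hadj.symm, rfl, rfl⟩

theorem complete {u v : List V} (hu : u.Nodup) (hv : v.Nodup) (hp : u.Perm v)
    (ho : ∀ a b, G.Adj a b → ([a, b].Sublist u ↔ [a, b].Sublist v)) :
    EqvGen (CommStep G) u v := by
  induction u generalizing v with
  | nil =>
    rw [List.Perm.eq_nil hp.symm]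
    exact .refl _
  | cons x u ih =>
    have hxv : x ∈ v := hp.mem_iff.1 (by simp)
    obtain ⟨p, s, rfl⟩ := List.append_of_mem hxv
    have hxp : x ∉ p := by
      intro hmem
      exact (List.nodup_append.1 hv).2.2 x hmem x (by simp) rfl
    have hxs : x ∉ s := by
      have := (List.nodup_append.1 hv).2.1
      exact (List.nodup_cons.1 this).1
    have hxu : x ∉ u := (List.nodup_cons.1 hu).1
    have hpx : ∀ y ∈ p, ¬ G.Adj x y := by
      intro y hy hadj
      have hyx : [y, x].Sublist (p ++ x :: s) := by
        rw [List.sublist_append_iff]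
        exact ⟨[y], [x], rfl, List.singleton_sublist.2 hy, by simp⟩
      have hxy : [x, y].Sublist (p ++ x :: s) := by
        refine (ho x y hadj).1 ?_
        have hyu : y ∈ u := by
          have : y ∈ x :: u := hp.mem_iff.2 (by simp [hy])
          rcases this with _ | h
          · exact absurd hy hxp
          · simpa
        exact List.cons_sublist_cons.2 (List.singleton_sublist.2 hyu)
      exact hadj.ne (pair_asymm hv hxy hyx)
    have hb := bubble (G := G) p s hpx
    have hps : (p ++ s).Nodup := by
      have h' := (eqv_perm hb).nodup_iff.1 hv
      exact (List.nodup_cons.1 h').2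
    have hxps : x ∉ p ++ s := by simp [hxp, hxs]
    have hperm : u.Perm (p ++ s) := by
      have : (x :: u).Perm (x :: (p ++ s)) := hp.trans (eqv_perm hb)
      exact (List.perm_cons x).1 this
    have ho' : ∀ a b, G.Adj a b → ([a, b].Sublist u ↔ [a, b].Sublist (p ++ s)) := by
      intro a b hadj
      constructor
      · intro h1
        have hau : a ∈ u := h1.subset (by simp)
        have h2 : [a, b].Sublist (p ++ x :: s) := (ho a b hadj).1 (h1.cons x)
        have h3 : [a, b].Sublist (x :: (p ++ s)) :=
          (eqv_pair_sublist hb hadj).1 h2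
        exact sublist_of_cons_of_not_mem h3 (by
          simp only [List.mem_cons, List.not_mem_nil, or_false]
          rintro (rfl | rfl)
          · exact hxu hau
          · exact hxu (h1.subset (by simp)))
      · intro h1
        have ha : a ∈ p ++ s := h1.subset (by simp)
        have h2 : [a, b].Sublist (x :: (p ++ s)) := h1.cons x
        have h3 : [a, b].Sublist (p ++ x :: s) := (eqv_pair_sublist hb hadj).2 h2
        have h4 : [a, b].Sublist (x :: u) := (ho a b hadj).2 h3
        exact sublist_of_cons_of_not_mem h4 (by
          simp only [List.mem_cons, List.not_mem_nil, or_false]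
          rintro (rfl | rfl)
          · exact hxps ha
          · exact hxps (h1.subset (by simp)))
    have hmain : EqvGen (CommStep G) (x :: u) (x :: (p ++ s)) :=
      eqvGen_cons x (ih (List.nodup_cons.1 hu).2 hps hperm ho')
    exact .trans _ _ _ hmain (.symm _ _ hb)


/-- The set of letters of a commutation class. -/
def lettersFn {V : Type*} [DecidableEq V] (G : SimpleGraph V) : BIdeal G → Finset V :=
  Quotient.lift (fun u : {w : List V // w.Nodup} => u.1.toFinset)
    (fun _ _ h => List.toFinset_eq_of_perm _ _ (eqv_perm h))

theorem lettersFn_mk {V : Type*} [DecidableEq V] (G : SimpleGraph V)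
    (u : {w : List V // w.Nodup}) : lettersFn G (mkClass G u) = u.1.toFinset := rfl

theorem mkClass_eq_iff {V : Type*} (G : SimpleGraph V) (a b : {w : List V // w.Nodup}) :
    mkClass G a = mkClass G b ↔ EqvGen (CommStep G) a.1 b.1 :=
  ⟨fun h => Quotient.exact h, fun h => Quotient.sound h⟩

/-- The class of the subword of `w` with letters in `S`. -/
noncomputable def subClass {V : Type*} [DecidableEq V] (G : SimpleGraph V)
    (w : {w : List V // w.Nodup}) (S : Finset V) : BIdeal G :=
  mkClass G ⟨w.1.filter (· ∈ S), w.2.filter _⟩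

theorem subClass_le {V : Type*} [DecidableEq V] (G : SimpleGraph V)
    (w : {w : List V // w.Nodup}) (S : Finset V) :
    bLE G (subClass G w S) (mkClass G w) :=
  ⟨⟨w.1.filter (· ∈ S), w.2.filter _⟩, w, rfl, rfl, List.filter_sublist⟩

theorem bLE_letters {V : Type*} [DecidableEq V] (G : SimpleGraph V) {τ τ' : BIdeal G}
    (h : bLE G τ τ') : lettersFn G τ ⊆ lettersFn G τ' := by
  obtain ⟨a, b, ha, hb, hab⟩ := h
  subst ha; subst hb
  rw [lettersFn_mk, lettersFn_mk]
  intro x hx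
  rw [List.mem_toFinset] at hx ⊢
  exact hab.subset hx

theorem subClass_eq {V : Type*} [DecidableEq V] (G : SimpleGraph V)
    (w t s : {w : List V // w.Nodup}) (hs : mkClass G s = mkClass G w)
    (hsub : t.1.Sublist s.1) : subClass G w t.1.toFinset = mkClass G t := by
  have heq : EqvGen (CommStep G) s.1 w.1 := Quotient.exact hs
  have htw : ∀ x ∈ t.1, x ∈ w.1 := fun x hx =>
    (eqv_perm heq).mem_iff.1 (hsub.subset hx)
  apply (mkClass_eq_iff G _ _).2
  apply Relation.EqvGen.symm
  apply complete t.2 (w.2.filter _)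
  · apply List.perm_of_nodup_nodup_toFinset_eq t.2 (w.2.filter _)
    rw [List.toFinset_filter]
    ext x
    simp only [Finset.mem_filter, List.mem_toFinset, decide_eq_true_eq]
    exact ⟨fun h => ⟨htw x h, h⟩, fun h => h.2⟩
  · intro a b hadj
    constructor
    · intro h
      have ha : a ∈ t.1 := h.subset (by simp)
      have hb : b ∈ t.1 := h.subset (by simp)
      have hw : [a, b].Sublist w.1 :=
        (eqv_pair_sublist heq hadj).1 (h.trans hsub)
      have := hw.filter (· ∈ t.1.toFinset)
      simpa [List.filter, ha, hb] using this
    · intro h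
      have ha : a ∈ t.1 := by
        have := h.subset (show a ∈ [a, b] by simp)
        simp only [List.mem_filter, List.mem_toFinset, decide_eq_true_eq] at this
        exact this.2
      have hb : b ∈ t.1 := by
        have := h.subset (show b ∈ [a, b] by simp)
        simp only [List.mem_filter, List.mem_toFinset, decide_eq_true_eq] at this
        exact this.2
      have hs' : [a, b].Sublist s.1 :=
        (eqv_pair_sublist heq hadj).2 (h.trans List.filter_sublist)
      rcases pair_total ha hb hadj.ne with h' | h'
      · exact h'
      · exact absurd (pair_asymm s.2 hs' (h'.trans hsub)) hadj.ne

end Aux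

/-- **Principal order ideals in the boolean ideal are boolean.**  If `σ ∈ 𝔅(G)` is the
class of an injective word of length `k`, then the lower order ideal `{τ : τ ≤ σ}` is
order-isomorphic to the lattice of all subsets of a `k`-element set.  (In particular,
`𝔅(G)` is a simplicial poset.) -/
theorem bIdeal_principal_ideal_boolean {V : Type*} (G : SimpleGraph V)
    (w : {w : List V // w.Nodup}) (k : ℕ) (hk : w.1.length = k) :
    ∃ φ : {τ : BIdeal G // bLE G τ (mkClass G w)} ≃ Finset (Fin k),
      ∀ a b : {τ : BIdeal G // bLE G τ (mkClass G w)},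
        bLE G a.1 b.1 ↔ φ a ⊆ φ b := by
  classical
  set A : Finset V := w.1.toFinset with hA
  have hwA : lettersFn G (mkClass G w) = A := lettersFn_mk G w
  have key : ∀ τ : {τ : BIdeal G // bLE G τ (mkClass G w)},
      subClass G w (lettersFn G τ.1) = τ.1 := by
    rintro ⟨τ, a, b, ha, hb, hab⟩
    subst ha
    rw [lettersFn_mk]
    exact subClass_eq G w a b hb hab
  let e1 : {τ : BIdeal G // bLE G τ (mkClass G w)} ≃ {S : Finset V // S ⊆ A} :=
    { toFun := fun τ => ⟨lettersFn G τ.1, by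
        have := bLE_letters G τ.2
        rwa [hwA] at this⟩
      invFun := fun S => ⟨subClass G w S.1, subClass_le G w S.1⟩
      left_inv := fun τ => Subtype.ext (key τ)
      right_inv := fun S => Subtype.ext (by
        show lettersFn G (subClass G w S.1) = S.1
        rw [show subClass G w S.1
            = mkClass G ⟨w.1.filter (· ∈ S.1), w.2.filter _⟩ from rfl, lettersFn_mk]
        rw [List.toFinset_filter]
        ext x
        simp only [Finset.mem_filter, List.mem_toFinset, decide_eq_true_eq]
        exact ⟨fun h => h.2, fun h => ⟨List.mem_toFinset.1 (S.2 h), h⟩⟩) }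
  have hord1 : ∀ a b : {τ : BIdeal G // bLE G τ (mkClass G w)},
      bLE G a.1 b.1 ↔ (e1 a).1 ⊆ (e1 b).1 := by
    intro a b
    constructor
    · intro h
      exact bLE_letters G h
    · intro h
      refine ⟨⟨w.1.filter (· ∈ lettersFn G a.1), w.2.filter _⟩,
        ⟨w.1.filter (· ∈ lettersFn G b.1), w.2.filter _⟩, key a, key b, ?_⟩
      apply List.monotone_filter_right
      intro x hx
      simp only [decide_eq_true_eq] at hx ⊢
      exact h hx
  let e2a : {S : Finset V // S ⊆ A} ≃ Finset {x // x ∈ A} :=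
    { toFun := fun S => S.1.subtype (· ∈ A)
      invFun := fun T => ⟨T.map (Function.Embedding.subtype _), by
        intro x hx
        simp only [Finset.mem_map, Function.Embedding.coe_subtype] at hx
        obtain ⟨y, _, rfl⟩ := hx
        exact y.2⟩
      left_inv := fun S => Subtype.ext (by
        show (S.1.subtype (· ∈ A)).map (Function.Embedding.subtype _) = S.1
        rw [Finset.subtype_map]
        exact Finset.filter_true_of_mem (fun x hx => S.2 hx))
      right_inv := fun T => by
        show ((T.map (Function.Embedding.subtype _)).subtype (· ∈ A)) = T
        ext a
        simp only [Finset.mem_subtype, Finset.mem_map, Function.Embedding.coe_subtype,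
          Subtype.exists, exists_and_right, exists_eq_right, Subtype.coe_eta]
        exact ⟨fun ⟨_, h⟩ => h, fun h => ⟨a.2, h⟩⟩ }
  have hord2 : ∀ S T : {S : Finset V // S ⊆ A}, S.1 ⊆ T.1 ↔ e2a S ⊆ e2a T := by
    intro S T
    simp only [e2a, Equiv.coe_fn_mk]
    constructor
    · intro h a ha
      rw [Finset.mem_subtype] at ha ⊢
      exact h ha
    · intro h x hx
      have hxA : x ∈ A := S.2 hx
      have := h (Finset.mem_subtype.2 (show ((⟨x, hxA⟩ : {x // x ∈ A}) : V) ∈ S.1 from hx))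
      exact Finset.mem_subtype.1 this
  have hcard : Fintype.card {x // x ∈ A} = k := by
    rw [Fintype.card_coe, hA, List.toFinset_card_of_nodup w.2, hk]
  let e2b : Finset {x // x ∈ A} ≃ Finset (Fin k) :=
    Equiv.finsetCongr (Fintype.equivFinOfCardEq hcard)
  have hord3 : ∀ S T : Finset {x // x ∈ A}, S ⊆ T ↔ e2b S ⊆ e2b T := by
    intro S T
    simp only [e2b, Equiv.finsetCongr_apply]
    exact (Finset.map_subset_map).symm
  refine ⟨(e1.trans e2a).trans e2b, fun a b => ?_⟩
  rw [hord1 a b, hord2, hord3]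
  rfl
end

section
/- Let (W,S) be a Coxeter system with S finite, and regard W as a poset under the Bruhat order. An element w ∈ W is boolean (i.e. its principal lower order ideal {u ∈ W : u ≤ w} is order-isomorphic to the lattice of subsets of a finite set) if and only if no reduced word for w has a repeated letter, i.e. every reduced word for w consists of pairwise distinct generators. -/
/-- The Bruhat order on a Coxeter group: `u ≤ w` iff some reduced word for `u` is a
subsequence of some reduced word for `w`. -/
def BruhatLE {B W : Type*} [Group W] {M : CoxeterMatrix B} (cs : CoxeterSystem M W)
    (u w : W) : Prop :=
  ∃ a b : List B, cs.IsReduced a ∧ cs.IsReduced b ∧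
    cs.wordProd a = u ∧ cs.wordProd b = w ∧ a.Sublist b

/-- An element of a Coxeter group is boolean if its principal lower order ideal in the
Bruhat order is order-isomorphic to the lattice of all subsets of a finite set. -/
def IsBoolean {B W : Type*} [Group W] {M : CoxeterMatrix B} (cs : CoxeterSystem M W)
    (w : W) : Prop :=
  ∃ (k : ℕ) (φ : {u : W // BruhatLE cs u w} ≃ Finset (Fin k)),
    ∀ a b : {u : W // BruhatLE cs u w}, BruhatLE cs a.1 b.1 ↔ φ a ⊆ φ b

namespace BooleanAux

open List CoxeterSystem

/-- Auxiliary group for the reflection-parity cocycle. -/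
structure BV (W : Type*) where
  fn : W → ZMod 2
  el : W

@[ext] theorem BV.ext' {W : Type*} {x y : BV W} (h1 : x.fn = y.fn) (h2 : x.el = y.el) :
    x = y := by cases x; cases y; simp_all

variable {W : Type*} [Group W]

instance : Group (BV W) where
  mul x y := ⟨fun t => x.fn (y.el * t * y.el⁻¹) + y.fn t, x.el * y.el⟩
  one := ⟨0, 1⟩
  inv x := ⟨fun t => x.fn (x.el⁻¹ * t * x.el), x.el⁻¹⟩
  mul_assoc x y z := by
    refine BV.ext' (funext fun t => ?_) (mul_assoc ..)
    show (x.fn (y.el * (z.el * t * z.el⁻¹) * y.el⁻¹) + y.fn (z.el * t * z.el⁻¹)) + z.fn t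
       = x.fn ((y.el * z.el) * t * (y.el * z.el)⁻¹) + (y.fn (z.el * t * z.el⁻¹) + z.fn t)
    rw [add_assoc]
    congr 2
    group
  one_mul x := by
    refine BV.ext' (funext fun t => ?_) (one_mul _)
    show (0 : W → ZMod 2) _ + x.fn t = x.fn t
    simp [Pi.zero_apply]
  mul_one x := by
    refine BV.ext' (funext fun t => ?_) (mul_one _)
    show x.fn (1 * t * 1⁻¹) + (0 : W → ZMod 2) t = x.fn t
    simp
  inv_mul_cancel x := by
    refine BV.ext' (funext fun t => ?_) (inv_mul_cancel _)
    show x.fn (x.el⁻¹ * (x.el * t * x.el⁻¹) * x.el) + x.fn t = (0 : W → ZMod 2) t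
    have : x.el⁻¹ * (x.el * t * x.el⁻¹) * x.el = t := by group
    rw [this, Pi.zero_apply, CharTwo.add_self_eq_zero]

theorem BV.mul_def (x y : BV W) :
    x * y = ⟨fun t => x.fn (y.el * t * y.el⁻¹) + y.fn t, x.el * y.el⟩ := rfl

theorem BV.inv_def (x : BV W) :
    x⁻¹ = ⟨fun t => x.fn (x.el⁻¹ * t * x.el), x.el⁻¹⟩ := rfl

theorem BV.one_def : (1 : BV W) = ⟨0, 1⟩ := rfl

@[simp] theorem BV.fn_one : (1 : BV W).fn = 0 := rfl

@[simp] theorem BV.el_one : (1 : BV W).el = 1 := rfl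

open Classical in
/-- indicator function -/
noncomputable def ind (x : W) : W → ZMod 2 := fun t => if t = x then 1 else 0

theorem ind_self (x : W) : ind x x = 1 := by simp [ind]

theorem ind_of_ne {x t : W} (h : t ≠ x) : ind x t = 0 := by simp [ind, h]

theorem ind_conj (x u : W) (t : W) : ind x (u * t * u⁻¹) = ind (u⁻¹ * x * u) t := by
  unfold ind
  congr 1
  simp only [eq_iff_iff]
  constructor
  · intro h; rw [← h]; group
  · intro h; rw [h]; group


section Cox

variable {B : Type*} {W : Type*} [Group W] {M : CoxeterMatrix B} (cs : CoxeterSystem M W)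

local prefix:100 "s" => cs.simple
local prefix:100 "π" => cs.wordProd
local prefix:100 "ℓ" => cs.length
local prefix:100 "ris" => cs.rightInvSeq

/-- generator images in `BV W`. -/
noncomputable def bvGen (i : B) : BV W := ⟨ind (s i), s i⟩

theorem bvGen_mul (i j : B) (k : ℕ) :
    (bvGen cs i * bvGen cs j) ^ k
      = ⟨fun t => ∑ l ∈ Finset.range (2 * k), ind ((s j) * ((s i) * (s j)) ^ l) t,
          ((s i) * (s j)) ^ k⟩ := by
  induction k with
  | zero => exact BV.ext' (funext fun t => by simp) (by simp)
  | succ k ih =>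
    rw [pow_succ, ih]
    refine BV.ext' (funext fun t => ?_) ((pow_succ _ _).symm)
    show (∑ l ∈ Finset.range (2 * k),
            ind ((s j) * ((s i) * (s j)) ^ l) ((s i * s j) * t * (s i * s j)⁻¹))
          + (ind (s i) ((s j) * t * (s j)⁻¹) + ind (s j) t)
        = ∑ l ∈ Finset.range (2 * (k + 1)), ind ((s j) * ((s i) * (s j)) ^ l) t
    have h1 : ∀ l : ℕ, ind ((s j) * ((s i) * (s j)) ^ l) ((s i * s j) * t * (s i * s j)⁻¹)
        = ind ((s j) * ((s i) * (s j)) ^ (2 + l)) t := by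
      intro l
      rw [ind_conj]
      congr 1
      rw [Nat.add_comm 2 l]
      have hinv : (s i * s j)⁻¹ = s j * s i := by
        rw [mul_inv_rev, cs.inv_simple, cs.inv_simple]
      rw [hinv]
      have h2 : (s j * s i) * ((s j) * ((s i) * (s j)) ^ l) * (s i * s j)
          = s j * ((s i * s j) * ((s i * s j) ^ l * (s i * s j))) := by
        simp [mul_assoc]
      rw [h2, ← pow_succ, ← pow_succ']
    have e1 : ind (s i) ((s j) * t * (s j)⁻¹) = ind ((s j) * ((s i) * (s j)) ^ 1) t := by
      rw [ind_conj, cs.inv_simple, pow_one, mul_assoc]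
    have e2 : ind (s j) t = ind ((s j) * ((s i) * (s j)) ^ 0) t := by
      rw [pow_zero, mul_one]
    rw [Finset.sum_congr rfl (fun l _ => h1 l), e1, e2,
      show 2 * (k + 1) = 2 + 2 * k from by ring, Finset.sum_range_add,
      Finset.sum_range_succ, Finset.sum_range_one]
    abel

theorem bvGen_liftable : M.IsLiftable (bvGen cs) := by
  intro i j
  rw [bvGen_mul]
  refine BV.ext' (funext fun t => ?_) (cs.simple_mul_simple_pow i j)
  show (∑ l ∈ Finset.range (2 * M i j), ind ((s j) * ((s i) * (s j)) ^ l) t) = (0 : W → ZMod 2) t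
  rw [show 2 * M i j = M i j + M i j from by ring, Finset.sum_range_add]
  have : ∀ l, ind ((s j) * ((s i) * (s j)) ^ (M i j + l)) t
      = ind ((s j) * ((s i) * (s j)) ^ l) t := by
    intro l
    rw [pow_add, cs.simple_mul_simple_pow i j, one_mul]
  rw [Finset.sum_congr rfl (fun l _ => this l), Pi.zero_apply, CharTwo.add_self_eq_zero]

/-- The parity homomorphism. -/
noncomputable def bvHom : W →* BV W := cs.lift ⟨bvGen cs, bvGen_liftable cs⟩

theorem bvHom_word (ω : List B) :
    bvHom cs (π ω) = ⟨fun t => ((ris ω).map (fun r => ind r t)).sum, π ω⟩ := by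
  induction ω with
  | nil =>
    rw [cs.wordProd_nil, map_one]
    exact BV.ext' (funext fun t => by simp) (by simp)
  | cons i ω ih =>
    rw [cs.wordProd_cons, map_mul, ih]
    have : bvHom cs (s i) = bvGen cs i := cs.lift_apply_simple (bvGen_liftable cs) i
    rw [this]
    refine BV.ext' (funext fun t => ?_) rfl
    show ind (s i) ((π ω) * t * (π ω)⁻¹) + ((ris ω).map (fun r => ind r t)).sum
        = ((ris (i :: ω)).map (fun r => ind r t)).sum
    rw [show ris (i :: ω) = ((π ω)⁻¹ * (s i) * (π ω)) :: ris ω from rfl]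
    rw [List.map_cons, List.sum_cons, ind_conj]

theorem bvHom_el (w : W) : (bvHom cs w).el = w := by
  obtain ⟨ω, rfl⟩ := cs.wordProd_surjective w
  rw [bvHom_word]

theorem sum_ind_of_not_mem {l : List W} {t : W} (h : t ∉ l) :
    (l.map (fun r => ind r t)).sum = 0 := by
  induction l with
  | nil => simp
  | cons x l ih =>
    simp only [List.map_cons, List.sum_cons]
    rw [ind_of_ne (by simp at h; tauto), ih (by simp at h; tauto), add_zero]

theorem sum_ind_of_mem_nodup {l : List W} {t : W} (hn : l.Nodup) (h : t ∈ l) :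
    (l.map (fun r => ind r t)).sum = 1 := by
  induction l with
  | nil => simp at h
  | cons x l ih =>
    simp only [List.map_cons, List.sum_cons]
    rcases List.mem_cons.mp h with rfl | hm
    · rw [ind_self, sum_ind_of_not_mem (List.nodup_cons.mp hn).1, add_zero]
    · rw [ind_of_ne ?_, ih (List.nodup_cons.mp hn).2 hm, zero_add]
      rintro rfl
      exact (List.nodup_cons.mp hn).1 hm

theorem bvHom_fn_refl_self {t : W} (ht : cs.IsReflection t) : (bvHom cs t).fn t = 1 := by
  obtain ⟨x, i, rfl⟩ := ht
  have hx : (bvHom cs x).el = x := bvHom_el cs x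
  have hs : bvHom cs (s i) = bvGen cs i := cs.lift_apply_simple (bvGen_liftable cs) i
  rw [map_mul, map_mul, map_inv, hs]
  set a := bvHom cs x with ha
  show (a.fn ((s i) * (a.el⁻¹ * (x * s i * x⁻¹) * a.el⁻¹⁻¹) * (s i)⁻¹)
      + ind (s i) (a.el⁻¹ * (x * s i * x⁻¹) * a.el⁻¹⁻¹))
      + a.fn (a.el⁻¹ * (x * s i * x⁻¹) * a.el) = 1
  rw [hx]
  have e1 : x⁻¹ * (x * s i * x⁻¹) * x⁻¹⁻¹ = s i := by group
  have e2 : x⁻¹ * (x * s i * x⁻¹) * x = s i := by group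
  have e3 : (s i) * (s i) * (s i)⁻¹ = s i := by group
  rw [e1, e2, e3, ind_self]
  have : ∀ c : ZMod 2, (c + 1) + c = 1 := by decide
  exact this _

/-- **Strong exchange**. -/
theorem mem_rightInvSeq_of_isRightInversion {ω : List B} (hω : cs.IsReduced ω) {t : W}
    (ht : cs.IsRightInversion (π ω) t) : t ∈ ris ω := by
  by_contra hmem
  set w := π ω with hw
  have hν : (bvHom cs w).fn t = 0 := by
    rw [bvHom_word]
    exact sum_ind_of_not_mem hmem
  have htt : cs.IsReflection t := ht.1
  have hel : (bvHom cs t).el = t := bvHom_el cs t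
  have hu : (bvHom cs (w * t)).fn t = 1 := by
    rw [map_mul]
    show (bvHom cs w).fn ((bvHom cs t).el * t * (bvHom cs t).el⁻¹) + (bvHom cs t).fn t = 1
    rw [hel, bvHom_fn_refl_self cs htt]
    have : t * t * t⁻¹ = t := by group
    rw [this, hν, zero_add]
  obtain ⟨c, hc, hcw⟩ := cs.exists_reduced_word' (w * t)
  have htc : t ∈ ris c := by
    by_contra hmc
    rw [hcw, bvHom_word] at hu
    have hu2 : ((ris c).map (fun r => ind r t)).sum = 1 := hu
    rw [sum_ind_of_not_mem hmc] at hu2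
    exact zero_ne_one hu2
  have := cs.isRightInversion_of_mem_rightInvSeq hc htc
  rw [← hcw] at this
  have h1 : ℓ (w * t * t) < ℓ (w * t) := this.2
  rw [mul_assoc, htt.mul_self, mul_one] at h1
  have h2 := ht.2
  omega

theorem isReduced_nil : cs.IsReduced ([] : List B) := by
  simp [CoxeterSystem.IsReduced]

theorem isReduced_singleton (i : B) : cs.IsReduced [i] := by
  simp [CoxeterSystem.IsReduced, cs.length_simple]

/-- Deletion step: a non-reduced word has a strictly shorter sublist with the same product. -/
theorem exists_shorter_sublist_of_not_isReduced {ω : List B} (h : ¬ cs.IsReduced ω) :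
    ∃ c, c <+ ω ∧ π c = π ω ∧ c.length < ω.length := by
  have hne : ω ≠ [] := by rintro rfl; exact h (isReduced_nil cs)
  have hlen1 : 1 ≤ ω.length := List.length_pos_iff.mpr hne
  have hex : ∃ j, ¬ cs.IsReduced (ω.take (j + 1)) := by
    refine ⟨ω.length - 1, ?_⟩
    rwa [show ω.length - 1 + 1 = ω.length from by omega, List.take_length]
  classical
  set j := Nat.find hex with hjdef
  have hj1 : ¬ cs.IsReduced (ω.take (j + 1)) := Nat.find_spec hex
  have hjmin : ∀ m, m < j → cs.IsReduced (ω.take (m + 1)) := by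
    intro m hm
    by_contra hcon
    have hle := Nat.find_min' hex hcon
    omega
  have hjle : j ≤ ω.length - 1 := Nat.find_min' hex (by
    rwa [show ω.length - 1 + 1 = ω.length from by omega, List.take_length])
  have hjlt : j < ω.length := by omega
  have htakej : cs.IsReduced (ω.take j) := by
    rcases Nat.eq_zero_or_pos j with hj0 | hj
    · rw [hj0, List.take_zero]; exact isReduced_nil cs
    · have := hjmin (j - 1) (by omega)
      rwa [show j - 1 + 1 = j from by omega] at this
  have htake_succ : ω.take (j + 1) = ω.take j ++ [ω[j]] := by
    rw [List.take_succ, List.getElem?_eq_getElem hjlt]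
    rfl
  have hlentakej : (ω.take j).length = j := by
    rw [List.length_take]; omega
  have hlv : ℓ (π (ω.take j)) = j := by rw [htakej, hlentakej]
  have hinv : cs.IsRightInversion (π (ω.take j)) (s ω[j]) := by
    constructor
    · exact cs.isReflection_simple _
    · rcases cs.length_mul_simple (π (ω.take j)) ω[j] with h1 | h1
      · exfalso
        apply hj1
        show ℓ (π (ω.take (j+1))) = _
        rw [htake_succ, cs.wordProd_append, cs.wordProd_singleton, List.length_append,
          List.length_singleton, hlentakej, h1, hlv]
      · omega
  have hmem := mem_rightInvSeq_of_isRightInversion cs htakej hinv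
  obtain ⟨m, hm, hget⟩ := List.mem_iff_getElem.mp hmem
  have hmlt : m < (ω.take j).length := by
    rw [cs.length_rightInvSeq] at hm; exact hm
  have hgetD : (cs.rightInvSeq (ω.take j)).getD m 1 = s ω[j] := by
    rw [List.getD_eq_getElem _ _ hm, hget]
  have herase := cs.wordProd_mul_getD_rightInvSeq (ω.take j) m
  rw [hgetD] at herase
  refine ⟨(ω.take j).eraseIdx m ++ ω.drop (j + 1), ?_, ?_, ?_⟩
  · have h1 : (ω.take j).eraseIdx m <+ ω.take j := List.eraseIdx_sublist _ m
    have h2 : ω.take j <+ ω.take (j + 1) := by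
      rw [htake_succ]; exact List.sublist_append_left _ _
    calc (ω.take j).eraseIdx m ++ ω.drop (j + 1)
        <+ ω.take (j + 1) ++ ω.drop (j + 1) := List.Sublist.append (h1.trans h2) (by rfl)
      _ = ω := List.take_append_drop _ _
  · conv_rhs => rw [← List.take_append_drop (j + 1) ω]
    rw [cs.wordProd_append, cs.wordProd_append, htake_succ, cs.wordProd_append,
      cs.wordProd_singleton, ← herase]
  · rw [List.length_append]
    have h3 : ((ω.take j).eraseIdx m).length + 1 = (ω.take j).length :=
      List.length_eraseIdx_add_one hmlt
    have h4 : (ω.drop (j+1)).length = ω.length - (j+1) := List.length_drop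
    omega

/-- Every word has a reduced sublist with the same product. -/
theorem exists_reduced_sublist (ω : List B) :
    ∃ c, c <+ ω ∧ cs.IsReduced c ∧ π c = π ω := by
  generalize hn : ω.length = n
  induction n using Nat.strong_induction_on generalizing ω with
  | _ n ih =>
    by_cases hred : cs.IsReduced ω
    · exact ⟨ω, by rfl, hred, rfl⟩
    · obtain ⟨c, hsub, hprod, hlt⟩ := exists_shorter_sublist_of_not_isReduced cs hred
      obtain ⟨c', hsub', hred', hprod'⟩ := ih c.length (by omega) c rfl
      exact ⟨c', hsub'.trans hsub, hred', hprod'.trans hprod⟩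

/-- A single step in the Bruhat order. -/
def bstep (x y : W) : Prop := ∃ t, cs.IsReflection t ∧ y = x * t ∧ ℓ x < ℓ y

/-- The Bruhat order, defined via reflections. -/
def ble : W → W → Prop := Relation.ReflTransGen (bstep cs)

theorem ble.refl (x : W) : ble cs x x := Relation.ReflTransGen.refl

theorem bstep_mul_left (i : B) (x : W) (h : ℓ x < ℓ (s i * x)) : bstep cs x (s i * x) := by
  refine ⟨x⁻¹ * s i * x, ?_, by group, h⟩
  have := (cs.isReflection_simple i).conj x⁻¹
  simpa using this

/-- subword property, one direction: if `u ≤ w` then `u` has a reduced word that is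
a sublist of any given reduced word of `w`. -/
theorem exists_sublist_of_ble {u w : W} (hble : ble cs u w) {ω : List B}
    (hred : cs.IsReduced ω) (hprod : π ω = w) :
    ∃ a, a <+ ω ∧ cs.IsReduced a ∧ π a = u := by
  generalize hn : ℓ w = n
  induction n using Nat.strong_induction_on generalizing u w ω with
  | _ n ih =>
    rcases Relation.ReflTransGen.cases_tail hble with rfl | ⟨x, hux, t, ht, rfl, hlt⟩
    · exact ⟨ω, by rfl, hred, hprod⟩
    · have hinv : cs.IsRightInversion (π ω) t := by
        refine ⟨ht, ?_⟩
        rw [hprod, mul_assoc, ht.mul_self, mul_one]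
        exact hlt
      have hmem := mem_rightInvSeq_of_isRightInversion cs hred hinv
      obtain ⟨m, hm, hget⟩ := List.mem_iff_getElem.mp hmem
      have hgetD : (cs.rightInvSeq ω).getD m 1 = t := by
        rw [List.getD_eq_getElem _ _ hm, hget]
      have herase := cs.wordProd_mul_getD_rightInvSeq ω m
      rw [hgetD, hprod] at herase
      have hx : π (ω.eraseIdx m) = x := by
        rw [← herase, mul_assoc, ht.mul_self, mul_one]
      obtain ⟨c, hcsub, hcred, hcprod⟩ := exists_reduced_sublist cs (ω.eraseIdx m)
      rw [hx] at hcprod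
      obtain ⟨a, hasub, hared, haprod⟩ := ih (ℓ x) (by omega) hux hcred hcprod rfl
      exact ⟨a, (hasub.trans hcsub).trans (List.eraseIdx_sublist _ m), hared, haprod⟩

theorem length_simple_mul_of_gt {w : W} {i : B} (h : ℓ w < ℓ (s i * w)) :
    ℓ (s i * w) = ℓ w + 1 := by
  rcases cs.length_simple_mul w i with h1 | h1 <;> omega

theorem length_simple_mul_of_lt {w : W} {i : B} (h : ℓ (s i * w) < ℓ w) :
    ℓ (s i * w) + 1 = ℓ w := by
  rcases cs.length_simple_mul w i with h1 | h1 <;> omega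

theorem grand (n : ℕ) : ∀ w : W, ℓ w ≤ n →
    ((∀ ω, cs.IsReduced ω → π ω = w → ∀ a, a <+ ω → ble cs (π a) w) ∧
     (∀ (i : B) (u : W), ℓ u < ℓ (s i * u) → ℓ (s i * w) < ℓ w → ble cs u w →
        ble cs (s i * u) w ∧ ble cs u (s i * w)) ∧
     (∀ (i : B) (u : W), ℓ u < ℓ (s i * u) → ℓ w < ℓ (s i * w) → ble cs u w →
        ble cs (s i * u) (s i * w))) := by
  induction n using Nat.strong_induction_on with
  | _ n ih =>
    intro w hw
    -- part B
    have partB : ∀ ω, cs.IsReduced ω → π ω = w → ∀ a, a <+ ω → ble cs (π a) w := by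
      intro ω hred hprod a hsub
      obtain ⟨a', ha'sub, ha'red, ha'prod⟩ := exists_reduced_sublist cs a
      rw [← ha'prod]
      replace hsub := ha'sub.trans hsub
      clear ha'sub ha'prod a
      cases ω with
      | nil =>
        rw [List.sublist_nil.mp hsub, ← hprod, cs.wordProd_nil]
        exact ble.refl cs 1
      | cons i ω₂ =>
        have hredω₂ : cs.IsReduced ω₂ := by
          have := CoxeterSystem.IsReduced.drop (j := 1) hred
          simpa using this
        have hlw : ℓ w = ω₂.length + 1 := by
          rw [← hprod, hred]; simp
        have hlw₂ : ℓ (π ω₂) = ω₂.length := hredω₂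
        have hstep : bstep cs (π ω₂) w := by
          refine ⟨(π ω₂)⁻¹ * s i * (π ω₂), ?_, ?_, by omega⟩
          · simpa using (cs.isReflection_simple i).conj (π ω₂)⁻¹
          · rw [← hprod, cs.wordProd_cons]; group
        have hn1 : ℓ (π ω₂) < n := by omega
        rcases List.sublist_cons_iff.mp hsub with hsub₂ | ⟨a₂, rfl, hsub₂⟩
        · have hble := ((ih (ℓ (π ω₂)) (by omega) (π ω₂) le_rfl).1) ω₂ hredω₂ rfl a' hsub₂
          exact hble.tail hstep
        · have ha₂red : cs.IsReduced a₂ := by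
            have := CoxeterSystem.IsReduced.drop (j := 1) ha'red
            simpa using this
          have hble₂ := ((ih (ℓ (π ω₂)) (by omega) (π ω₂) le_rfl).1) ω₂ hredω₂ rfl a₂ hsub₂
          have hlu : ℓ (π a₂) < ℓ (s i * π a₂) := by
            have h1 : ℓ (π (i :: a₂)) = a₂.length + 1 := by rw [ha'red]; simp
            rw [cs.wordProd_cons] at h1
            rw [h1, ha₂red]
            omega
          have hS := ((ih (ℓ (π ω₂)) (by omega) (π ω₂) le_rfl).2.2) i (π a₂) hlu
            (by rw [← cs.wordProd_cons, hprod]; omega) hble₂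
          rw [← cs.wordProd_cons, ← cs.wordProd_cons, hprod] at hS
          exact hS
    refine ⟨partB, ?_, ?_⟩
    -- part Z
    · intro i u hu hsw hble
      obtain ⟨Ψ, hΨred, hΨprod⟩ := cs.exists_reduced_word' (s i * w)
      have hlsw : ℓ (s i * w) + 1 = ℓ w := length_simple_mul_of_lt cs hsw
      have hredcons : cs.IsReduced (i :: Ψ) := by
        show ℓ (π (i :: Ψ)) = _
        rw [cs.wordProd_cons, ← hΨprod, cs.simple_mul_simple_cancel_left]
        rw [List.length_cons]
        have : Ψ.length = ℓ (s i * w) := by rw [hΨprod]; exact hΨred.symm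
        omega
      have hconsprod : π (i :: Ψ) = w := by
        rw [cs.wordProd_cons, ← hΨprod, cs.simple_mul_simple_cancel_left]
      obtain ⟨a, hasub, hared, haprod⟩ := exists_sublist_of_ble cs hble hredcons hconsprod
      rcases List.sublist_cons_iff.mp hasub with hsub₂ | ⟨a₂, rfl, hsub₂⟩
      · -- a <+ Ψ
        have hc2 : ble cs u (s i * w) := by
          have := ((ih (ℓ (s i * w)) (by omega) (s i * w) le_rfl).1) Ψ hΨred hΨprod.symm a hsub₂
          rwa [haprod] at this
        have hc1 := ((ih (ℓ (s i * w)) (by omega) (s i * w) le_rfl).2.2) i u hu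
          (by rw [cs.simple_mul_simple_cancel_left]; omega) hc2
        rw [cs.simple_mul_simple_cancel_left] at hc1
        exact ⟨hc1, hc2⟩
      · -- a = i :: a₂ : impossible
        exfalso
        have h1 : ℓ u = a₂.length + 1 := by rw [← haprod, hared]; simp
        have h2 : s i * u = π a₂ := by
          rw [← haprod, cs.wordProd_cons, cs.simple_mul_simple_cancel_left]
        have h3 : ℓ (s i * u) ≤ a₂.length := by
          rw [h2]; exact cs.length_wordProd_le a₂
        omega
    -- part S
    · intro i u hu hw' hble
      rcases Relation.ReflTransGen.cases_tail hble with rfl | ⟨y, huy, t, ht, rfl, hlt⟩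
      · exact ble.refl cs _
      · rcases Nat.lt_or_ge (ℓ y) (ℓ (s i * y)) with hy | hy
        · -- lift the last step
          have hS := ((ih (ℓ y) (by omega) y le_rfl).2.2) i u hu hy huy
          refine hS.tail ⟨t, ht, by rw [mul_assoc], ?_⟩
          have e1 : ℓ (s i * y) = ℓ y + 1 := length_simple_mul_of_gt cs hy
          have e2 : ℓ (s i * (y * t)) = ℓ (y * t) + 1 := length_simple_mul_of_gt cs hw'
          rw [e1, e2]
          omega
        · have hy2 : ℓ (s i * y) < ℓ y := by
            rcases Nat.lt_or_ge (ℓ (s i * y)) (ℓ y) with h | h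
            · exact h
            · exfalso
              have := cs.length_simple_mul_ne y i
              omega
          have hZ := ((ih (ℓ y) (by omega) y le_rfl).2.1) i u hu hy2 huy
          have c1 : ble cs (s i * u) y := hZ.1
          have c2 : ble cs (s i * u) (y * t) := c1.tail ⟨t, ht, rfl, hlt⟩
          refine c2.tail ⟨(y * t)⁻¹ * s i * (y * t), ?_, by group, hw'⟩
          simpa using (cs.isReflection_simple i).conj (y * t)⁻¹

/-- Bruhat order: `BruhatLE` agrees with the reflection-based order `ble`. -/
theorem bruhatLE_iff_ble {u w : W} : BruhatLE cs u w ↔ ble cs u w := by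
  constructor
  · rintro ⟨a, b, hared, hbred, rfl, rfl, hab⟩
    exact ((grand cs (ℓ (π b)) (π b) le_rfl).1) b hbred rfl a hab
  · intro h
    obtain ⟨ω, hωred, hωprod⟩ := cs.exists_reduced_word' w
    obtain ⟨a, hsub, hared, haprod⟩ := exists_sublist_of_ble cs h hωred hωprod.symm
    exact ⟨a, ω, hared, hωred, haprod, hωprod.symm, hsub⟩

theorem bruhatLE_refl (u : W) : BruhatLE cs u u := by
  obtain ⟨ω, hred, hprod⟩ := cs.exists_reduced_word' u
  exact ⟨ω, ω, hred, hred, hprod.symm, hprod.symm, by rfl⟩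

theorem one_bruhatLE (u : W) : BruhatLE cs 1 u := by
  obtain ⟨ω, hred, hprod⟩ := cs.exists_reduced_word' u
  exact ⟨[], ω, isReduced_nil cs, hred, cs.wordProd_nil, hprod.symm, List.nil_sublist ω⟩

theorem bruhatLE_length_le {u w : W} (h : BruhatLE cs u w) : ℓ u ≤ ℓ w := by
  obtain ⟨a, b, hared, hbred, rfl, rfl, hab⟩ := h
  rw [hared, hbred]
  exact hab.length_le

theorem bruhatLE_length_lt {u w : W} (h : BruhatLE cs u w) (hne : u ≠ w) : ℓ u < ℓ w := by
  obtain ⟨a, b, hared, hbred, rfl, rfl, hab⟩ := h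
  rcases Nat.lt_or_ge a.length b.length with hl | hl
  · rw [hared, hbred]; exact hl
  · exact absurd (by rw [hab.eq_of_length_le hl]) hne

/-- membership in a standard parabolic subgroup via words. -/
theorem mem_closure_iff_word {K : Set B} {w : W} :
    w ∈ Subgroup.closure (cs.simple '' K) ↔ ∃ τ : List B, (∀ j ∈ τ, j ∈ K) ∧ π τ = w := by
  constructor
  · intro h
    induction h using Subgroup.closure_induction with
    | mem x hx =>
      obtain ⟨j, hj, rfl⟩ := hx
      exact ⟨[j], by simpa using hj, cs.wordProd_singleton j⟩
    | one => exact ⟨[], by simp, cs.wordProd_nil⟩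
    | mul x y hx hy ihx ihy =>
      obtain ⟨τ₁, hτ₁, rfl⟩ := ihx
      obtain ⟨τ₂, hτ₂, rfl⟩ := ihy
      refine ⟨τ₁ ++ τ₂, ?_, cs.wordProd_append τ₁ τ₂⟩
      intro j hj
      rcases List.mem_append.mp hj with h | h
      · exact hτ₁ j h
      · exact hτ₂ j h
    | inv x hx ihx =>
      obtain ⟨τ, hτ, rfl⟩ := ihx
      refine ⟨τ.reverse, ?_, cs.wordProd_reverse τ⟩
      intro j hj
      exact hτ j (List.mem_reverse.mp hj)
  · rintro ⟨τ, hτ, rfl⟩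
    induction τ with
    | nil => simpa [cs.wordProd_nil] using Subgroup.one_mem _
    | cons j τ ihτ =>
      rw [cs.wordProd_cons]
      refine Subgroup.mul_mem _ (Subgroup.subset_closure ⟨j, hτ j (by simp), rfl⟩) ?_
      exact ihτ (fun x hx => hτ x (by simp [hx]))

theorem simple_mem_parabolic {K : Set B} {i : B}
    (h : s i ∈ Subgroup.closure (cs.simple '' K)) : ∃ j ∈ K, s j = s i := by
  obtain ⟨τ, hτ, hprod⟩ := (mem_closure_iff_word cs).mp h
  obtain ⟨τ', hsub, hred, hprod'⟩ := exists_reduced_sublist cs τ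
  rw [hprod] at hprod'
  have hlen : τ'.length = 1 := by
    rw [← hred, hprod', cs.length_simple]
  obtain ⟨j, rfl⟩ := List.length_eq_one_iff.mp hlen
  refine ⟨j, hτ j (hsub.subset (by simp)), ?_⟩
  rw [← cs.wordProd_singleton, hprod']

/-- Support: any letter of a reduced word of an element of a standard parabolic subgroup
has the same simple reflection as some element of the generating set. -/
theorem support_sub_parabolic {K : Set B} : ∀ {ω : List B}, cs.IsReduced ω →
    π ω ∈ Subgroup.closure (cs.simple '' K) → ∀ i ∈ ω, ∃ j ∈ K, s j = s i := by
  intro ω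
  generalize hn : ω.length = n
  induction n using Nat.strong_induction_on generalizing ω with
  | _ n ihn =>
    intro hred hmem i hi
    rcases List.eq_nil_or_concat ω with rfl | ⟨ψ, r, rfl⟩
    · simp at hi
    · rw [List.concat_eq_append] at hn hred hmem hi
      have hψred : cs.IsReduced ψ := by
        have := CoxeterSystem.IsReduced.take (j := ψ.length) hred
        rwa [List.take_left] at this
      have hπω : π (ψ ++ [r]) = π ψ * s r := by
        rw [cs.wordProd_append, cs.wordProd_singleton]
      have hπψ : π ψ = π (ψ ++ [r]) * s r := by
        rw [hπω, cs.simple_mul_simple_cancel_right]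
      have hlψ : ℓ (π ψ) = ψ.length := hψred
      have hlω : ℓ (π (ψ ++ [r])) = ψ.length + 1 := by
        rw [show ℓ (π (ψ ++ [r])) = (ψ ++ [r]).length from hred]; simp
      have hinv : cs.IsRightInversion (π (ψ ++ [r])) (s r) := by
        refine ⟨cs.isReflection_simple r, ?_⟩
        rw [← hπψ]
        omega
      obtain ⟨τ, hτK, hτprod⟩ := (mem_closure_iff_word cs).mp hmem
      obtain ⟨τ', hsub', hred', hprod'⟩ := exists_reduced_sublist cs τ
      rw [hτprod] at hprod'
      have hτ'K : ∀ j ∈ τ', j ∈ K := fun j hj => hτK j (hsub'.subset hj)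
      have hmem' := mem_rightInvSeq_of_isRightInversion cs hred' (by rwa [hprod'])
      obtain ⟨m, hm, hget⟩ := List.mem_iff_getElem.mp hmem'
      have hgetD : (cs.rightInvSeq τ').getD m 1 = s r := by
        rw [List.getD_eq_getElem _ _ hm, hget]
      have hmτ : m < τ'.length := by
        rw [cs.length_rightInvSeq] at hm; exact hm
      -- the erased word is a K-word for `π ω * s r`
      have herase := cs.wordProd_mul_getD_rightInvSeq τ' m
      rw [hgetD, hprod'] at herase
      -- s r is in the parabolic subgroup
      have hsr : s r ∈ Subgroup.closure (cs.simple '' K) := by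
        have hform := cs.getD_rightInvSeq τ' m
        rw [hgetD, List.getElem?_eq_getElem hmτ] at hform
        simp only [Option.map_some, Option.getD_some] at hform
        rw [hform]
        have hdropmem : π (τ'.drop (m+1)) ∈ Subgroup.closure (cs.simple '' K) := by
          refine (mem_closure_iff_word cs).mpr ⟨τ'.drop (m+1), ?_, rfl⟩
          exact fun j hj => hτ'K j ((List.drop_sublist _ _).subset hj)
        refine Subgroup.mul_mem _ (Subgroup.mul_mem _ (Subgroup.inv_mem _ hdropmem) ?_) hdropmem
        exact Subgroup.subset_closure ⟨τ'[m], hτ'K _ (List.getElem_mem hmτ), rfl⟩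
      rcases List.mem_append.mp hi with hiψ | hir
      · -- recurse on ψ
        have hmemψ : π ψ ∈ Subgroup.closure (cs.simple '' K) := by
          rw [hπψ, herase]
          refine (mem_closure_iff_word cs).mpr ⟨τ'.eraseIdx m, ?_, rfl⟩
          exact fun j hj => hτ'K j ((List.eraseIdx_sublist _ m).subset hj)
        exact ihn ψ.length (by simp at hn; omega) rfl hψred hmemψ i hiψ
      · obtain rfl : i = r := by simpa using hir
        exact simple_mem_parabolic cs hsr

/-- Support invariance: two reduced words for the same element use the same
set of simple reflections. -/
theorem support_invariance {b c : List B} (hb : cs.IsReduced b) (hc : cs.IsReduced c)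
    (hbc : π b = π c) : ∀ i ∈ b, ∃ j ∈ c, s j = s i := by
  intro i hi
  have hmem : π b ∈ Subgroup.closure (cs.simple '' {j | j ∈ c}) := by
    rw [hbc]
    exact (mem_closure_iff_word cs).mpr ⟨c, fun j hj => hj, rfl⟩
  exact support_sub_parabolic cs hb hmem i hi

/-- If the simple reflections of the letters of a reduced word are distinct, then every
sublist of the word is reduced. -/
theorem sublist_isReduced : ∀ (ω : List B), cs.IsReduced ω → (ω.map cs.simple).Nodup →
    ∀ a, a <+ ω → cs.IsReduced a := by
  intro ω
  induction ω with
  | nil =>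
    intro _ _ a ha
    rw [List.sublist_nil.mp ha]
    exact isReduced_nil cs
  | cons i ω₂ ih =>
    intro hred hnodup a hsub
    have hredω₂ : cs.IsReduced ω₂ := by
      have := CoxeterSystem.IsReduced.drop (j := 1) hred
      simpa using this
    have hnodup₂ : (ω₂.map cs.simple).Nodup := by
      rw [List.map_cons] at hnodup
      exact (List.nodup_cons.mp hnodup).2
    have hsimem : s i ∉ ω₂.map cs.simple := by
      rw [List.map_cons] at hnodup
      exact (List.nodup_cons.mp hnodup).1
    rcases List.sublist_cons_iff.mp hsub with hsub₂ | ⟨a₂, rfl, hsub₂⟩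
    · exact ih hredω₂ hnodup₂ a hsub₂
    · have ha₂red : cs.IsReduced a₂ := ih hredω₂ hnodup₂ a₂ hsub₂
      show ℓ (π (i :: a₂)) = (i :: a₂).length
      rw [cs.wordProd_cons, List.length_cons]
      rcases cs.length_simple_mul (π a₂) i with hgood | hbad
      · rw [hgood, ha₂red]
      · -- derive a contradiction
        exfalso
        set v := s i * π a₂ with hv
        obtain ⟨e, hered, heprod⟩ := cs.exists_reduced_word' v
        have heK : π a₂ ∈ Subgroup.closure (cs.simple '' {j | j = i ∨ j ∈ e}) := by
          refine (mem_closure_iff_word cs).mpr ⟨i :: e, ?_, ?_⟩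
          · intro j hj
            rcases List.mem_cons.mp hj with rfl | hj
            · exact Or.inl rfl
            · exact Or.inr hj
          · rw [cs.wordProd_cons, ← heprod, hv, cs.simple_mul_simple_cancel_left]
        have hsupp := support_sub_parabolic cs ha₂red heK
        classical
        set A₂ : Finset W := (a₂.map cs.simple).toFinset with hA₂
        set E : Finset W := (e.map cs.simple).toFinset with hE
        have hA₂card : A₂.card = a₂.length := by
          have hnd : (a₂.map cs.simple).Nodup := ((hsub₂.map cs.simple).nodup hnodup₂)
          rw [hA₂, List.card_toFinset, hnd.dedup, List.length_map]
        have hEcard : E.card ≤ e.length := by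
          rw [hE, List.card_toFinset]
          calc (e.map cs.simple).dedup.length ≤ (e.map cs.simple).length :=
                (List.dedup_sublist _).length_le
            _ = e.length := List.length_map _
        have helen : e.length = ℓ v := by rw [← hered, heprod]
        have hsub_insert : A₂ ⊆ insert (s i) E := by
          intro x hx
          rw [hA₂, List.mem_toFinset, List.mem_map] at hx
          obtain ⟨l, hl, rfl⟩ := hx
          obtain ⟨j, hj, hjs⟩ := hsupp l hl
          rcases hj with rfl | hj
          · rw [← hjs]; exact Finset.mem_insert_self _ _
          · refine Finset.mem_insert_of_mem ?_
            rw [hE, List.mem_toFinset, List.mem_map]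
            exact ⟨j, hj, hjs⟩
        by_cases hsi : s i ∈ A₂
        · rw [hA₂, List.mem_toFinset] at hsi
          apply hsimem
          exact (hsub₂.map cs.simple).subset hsi
        · have hA₂E : A₂ ⊆ E := by
            intro x hx
            rcases Finset.mem_insert.mp (hsub_insert hx) with rfl | h
            · exact absurd hx hsi
            · exact h
          have := Finset.card_le_card hA₂E
          have hlv : ℓ v + 1 = ℓ (π a₂) := hbad
          have : a₂.length ≤ ℓ v := by omega
          rw [ha₂red] at hlv
          omega

theorem nodup_of_isBoolean {w : W} (h : IsBoolean cs w) :
    ∀ ω : List B, cs.IsReduced ω → cs.wordProd ω = w → ω.Nodup := by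
  classical
  obtain ⟨k, φ, hφ⟩ := h
  intro ω hred hprod
  have hmemw : BruhatLE cs w w := bruhatLE_refl cs w
  have hmem1 : BruhatLE cs 1 w := one_bruhatLE cs w
  set wI : {u : W // BruhatLE cs u w} := ⟨w, hmemw⟩ with hwI
  set oneI : {u : W // BruhatLE cs u w} := ⟨1, hmem1⟩ with honeI
  -- φ sends 1 to ∅
  have hφone : φ oneI = ∅ := by
    have h1 : BruhatLE cs oneI.1 (φ.symm ∅).1 := one_bruhatLE cs _
    have := (hφ oneI (φ.symm ∅)).mp h1
    rw [Equiv.apply_symm_apply] at this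
    exact Finset.subset_empty.mp this
  -- k = ℓ w
  have hkle : k ≤ ℓ w := by
    set u : ℕ → {u : W // BruhatLE cs u w} := fun l => φ.symm (Finset.univ.filter fun x : Fin k => (x : ℕ) < l) with hu
    have hmono : ∀ l, l < k → ℓ (u l).1 < ℓ (u (l + 1)).1 := by
      intro l hl
      have hsub : (Finset.univ.filter fun x : Fin k => (x : ℕ) < l)
          ⊆ (Finset.univ.filter fun x : Fin k => (x : ℕ) < l + 1) := by
        refine Finset.monotone_filter_right _ ?_
        intro x hx
        omega
      have hble : BruhatLE cs (u l).1 (u (l + 1)).1 := by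
        refine (hφ (u l) (u (l + 1))).mpr ?_
        rw [hu]
        simpa using hsub
      have hne : (u l).1 ≠ (u (l + 1)).1 := by
        intro heq
        have : u l = u (l + 1) := Subtype.ext heq
        have heqT := congrArg φ this
        rw [hu] at heqT
        simp only [Equiv.apply_symm_apply] at heqT
        have hx : (⟨l, hl⟩ : Fin k) ∈ Finset.univ.filter fun x : Fin k => (x : ℕ) < l + 1 := by
          simp
        rw [← heqT] at hx
        simp at hx
      exact bruhatLE_length_lt cs hble hne
    have hgrow : ∀ l, l ≤ k → l ≤ ℓ (u l).1 := by
      intro l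
      induction l with
      | zero => omega
      | succ l ihl =>
        intro hlk
        have h1 := ihl (by omega)
        have h2 := hmono l (by omega)
        omega
    have := hgrow k le_rfl
    have hle := bruhatLE_length_le cs (u k).2
    omega
  have hNle : ℓ w ≤ k := by
    set v : ℕ → {u : W // BruhatLE cs u w} := fun j => ⟨π (ω.take j),
      ⟨ω.take j, ω, CoxeterSystem.IsReduced.take hred j, hred, rfl, hprod, List.take_sublist j ω⟩⟩ with hv
    have hlenv : ∀ j, j ≤ ω.length → ℓ (v j).1 = j := by
      intro j hj
      show ℓ (π (ω.take j)) = j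
      rw [CoxeterSystem.IsReduced.take hred j, List.length_take]
      omega
    have hmono : ∀ j, j < ω.length → φ (v j) ⊂ φ (v (j + 1)) := by
      intro j hj
      have hsub : ω.take j <+ ω.take (j + 1) := by
        have e : (ω.take (j + 1)).take j = ω.take j := by
          rw [List.take_take]
          congr 1
          omega
        rw [← e]
        exact List.take_sublist _ _
      have hble : BruhatLE cs (v j).1 (v (j + 1)).1 :=
        ⟨ω.take j, ω.take (j + 1), CoxeterSystem.IsReduced.take hred j, CoxeterSystem.IsReduced.take hred (j + 1),
          rfl, rfl, hsub⟩
      refine Finset.ssubset_iff_subset_ne.mpr ⟨(hφ _ _).mp hble, ?_⟩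
      intro heq
      have := φ.injective heq
      have hval : (v j).1 = (v (j + 1)).1 := by rw [this]
      have e1 := hlenv j (by omega)
      have e2 := hlenv (j + 1) (by omega)
      rw [hval] at e1
      omega
    have hgrow : ∀ j, j ≤ ω.length → j ≤ (φ (v j)).card := by
      intro j
      induction j with
      | zero => omega
      | succ j ihj =>
        intro hjk
        have h1 := ihj (by omega)
        have h2 := Finset.card_lt_card (hmono j (by omega))
        omega
    have h1 := hgrow ω.length le_rfl
    have h2 : (φ (v ω.length)).card ≤ k := by
      calc (φ (v ω.length)).card ≤ (Finset.univ : Finset (Fin k)).card := Finset.card_le_univ _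
        _ = k := by simp
    have hlω : ω.length = ℓ w := by rw [← hprod, hred]
    omega
  -- each singleton corresponds to a letter of ω
  have hatom : ∀ x : Fin k, ∃ j' ∈ ω, (φ.symm ({x} : Finset (Fin k))).1 = s j' := by
    intro x
    set ux : {u : W // BruhatLE cs u w} := φ.symm {x} with hux
    have hφux : φ ux = {x} := by rw [hux, Equiv.apply_symm_apply]
    obtain ⟨a, b, hared, hbred, haprod, hbprod, hab⟩ := ux.2
    have hlena : a.length = ℓ ux.1 := by rw [← haprod, hared]
    have hne1 : ux.1 ≠ 1 := by
      intro h1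
      have : ux = oneI := Subtype.ext h1
      rw [this, hφone] at hφux
      exact (Finset.singleton_ne_empty x) hφux.symm
    have hlen1 : a.length = 1 := by
      rcases Nat.lt_or_ge a.length 2 with h2 | h2
      · rcases Nat.eq_zero_or_pos a.length with h0 | h0
        · exfalso
          apply hne1
          rw [← haprod, List.length_eq_zero_iff.mp h0, cs.wordProd_nil]
        · omega
      · -- a.length ≥ 2 : contradiction
        exfalso
        have h0 : 0 < a.length := by omega
        have htake1 : a.take 1 = [a[0]] := by
          rw [List.take_succ, List.take_zero, List.getElem?_eq_getElem h0]
          rfl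
        have hsingle : [a[0]] <+ a := by
          rw [← htake1]; exact List.take_sublist 1 a
        set vI : {u : W // BruhatLE cs u w} := ⟨s a[0],
          ⟨[a[0]], b, isReduced_singleton cs _, hbred, cs.wordProd_singleton _, hbprod,
            hsingle.trans hab⟩⟩ with hvI
        have hblev : BruhatLE cs vI.1 ux.1 :=
          ⟨[a[0]], a, isReduced_singleton cs _, hared, cs.wordProd_singleton _, haprod, hsingle⟩
        have hsubx : φ vI ⊆ {x} := by
          rw [← hφux]
          exact (hφ vI ux).mp hblev
        rcases Finset.subset_singleton_iff.mp hsubx with hempty | hsing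
        · rw [← hφone] at hempty
          have : vI = oneI := φ.injective hempty
          have : s a[0] = 1 := congrArg Subtype.val this
          have h1 := cs.length_simple a[0]
          rw [this, cs.length_one] at h1
          omega
        · rw [← hφux] at hsing
          have : vI = ux := φ.injective hsing
          have hval : s a[0] = ux.1 := congrArg Subtype.val this
          have h1 := cs.length_simple a[0]
          rw [hval] at h1
          omega
    obtain ⟨j, rfl⟩ := List.length_eq_one_iff.mp hlen1
    have hja : ux.1 = s j := by rw [← haprod, cs.wordProd_singleton]
    have hjb : j ∈ b := hab.subset (by simp)
    have hbω : π b = π ω := by rw [hbprod, hprod]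
    obtain ⟨j', hj', hsj'⟩ := support_invariance cs hbred hred hbω j hjb
    exact ⟨j', hj', by rw [hja, hsj']⟩
  -- counting
  by_contra hnd
  have hinj : Function.Injective (fun x : Fin k => (φ.symm ({x} : Finset (Fin k))).1) := by
    intro x y hxy
    have : φ.symm ({x} : Finset (Fin k)) = φ.symm {y} := Subtype.ext hxy
    have := φ.symm.injective this
    exact Finset.singleton_injective this
  have hcard1 : k ≤ (ω.map cs.simple).toFinset.card := by
    have hmaps : ∀ x : Fin k, (φ.symm ({x} : Finset (Fin k))).1 ∈ (ω.map cs.simple).toFinset := by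
      intro x
      obtain ⟨j', hj', hx⟩ := hatom x
      rw [List.mem_toFinset, hx]
      exact List.mem_map_of_mem (f := cs.simple) hj'
    calc k = (Finset.univ : Finset (Fin k)).card := by simp
      _ ≤ (ω.map cs.simple).toFinset.card := by
          refine Finset.card_le_card_of_injOn _ (fun x _ => hmaps x) hinj.injOn
  have hcard2 : (ω.map cs.simple).toFinset.card ≤ ω.dedup.length := by
    have e0 : (ω.map cs.simple).toFinset = (ω.dedup.map cs.simple).toFinset := by
      ext x
      simp
    rw [e0]
    calc (ω.dedup.map cs.simple).toFinset.card ≤ (ω.dedup.map cs.simple).length :=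
          List.toFinset_card_le _
      _ = ω.dedup.length := List.length_map _
  have hcard3 : ω.dedup.length < ω.length := by
    have hsub := List.dedup_sublist ω
    rcases Nat.lt_or_ge ω.dedup.length ω.length with h | h
    · exact h
    · exfalso
      have heq := hsub.eq_of_length (by have := hsub.length_le; omega)
      apply hnd
      rw [← heq]
      exact List.nodup_dedup ω
  have hlω : ω.length = ℓ w := by rw [← hprod, hred]
  omega

theorem isBoolean_of_nodup {w : W}
    (H : ∀ ω : List B, cs.IsReduced ω → cs.wordProd ω = w → ω.Nodup) : IsBoolean cs w := by
  classical
  obtain ⟨ω, hred, hprodsymm⟩ := cs.exists_reduced_word' w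
  have hprod : π ω = w := hprodsymm.symm
  have hnd : ω.Nodup := H ω hred hprod
  have hget_inj : Function.Injective ω.get := List.nodup_iff_injective_get.mp hnd
  -- the simple reflections of the letters of ω are pairwise distinct
  have hmapnd : (ω.map cs.simple).Nodup := by
    by_contra hmnd
    have hni : ¬ Function.Injective (ω.map cs.simple).get := fun hinj =>
      hmnd (List.nodup_iff_injective_get.mpr hinj)
    obtain ⟨p, q, heq, hne⟩ := Function.not_injective_iff.mp hni
    have hp : (p : ℕ) < ω.length := by have := p.2; simpa using this
    have hq : (q : ℕ) < ω.length := by have := q.2; simpa using this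
    have heq' : s (ω[(p : ℕ)]) = s (ω[(q : ℕ)]) := by
      have e1 := List.get_eq_getElem (l := ω.map cs.simple) (i := p)
      have e2 := List.get_eq_getElem (l := ω.map cs.simple) (i := q)
      rw [e1, e2, List.getElem_map, List.getElem_map] at heq
      exact heq
    have hpq : (p : ℕ) ≠ (q : ℕ) := fun h => hne (Fin.ext h)
    set ω' := ω.set q (ω[(p : ℕ)]) with hω'
    have hmapeq : ω'.map cs.simple = ω.map cs.simple := by
      rw [hω', List.map_set]
      apply List.ext_getElem (by simp)
      intro i h1 h2
      rw [List.getElem_set]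
      split
      · next hqi =>
        subst hqi
        rw [List.getElem_map]
        exact heq'
      · rfl
    have hwp : ∀ l : List B, π l = (l.map cs.simple).prod := fun l => rfl
    have hπeq : π ω' = π ω := by rw [hwp, hwp, hmapeq]
    have hred' : cs.IsReduced ω' := by
      show ℓ (π ω') = ω'.length
      rw [hπeq, hω', List.length_set]
      exact hred
    have hnd' := H ω' hred' (by rw [hπeq, hprod])
    have hlen' : ω'.length = ω.length := by rw [hω', List.length_set]
    have h1 : ω'[(p : ℕ)]'(by omega) = ω[(p : ℕ)] := by
      simp only [hω', List.getElem_set]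
      split <;> rfl
    have h2 : ω'[(q : ℕ)]'(by omega) = ω[(p : ℕ)] := by
      simp [hω', List.getElem_set]
    have hinj' := List.nodup_iff_injective_get.mp hnd'
    have : (⟨(p : ℕ), by omega⟩ : Fin ω'.length) = ⟨(q : ℕ), by omega⟩ := by
      apply hinj'
      rw [List.get_eq_getElem, List.get_eq_getElem]
      show ω'[(p : ℕ)]'_ = ω'[(q : ℕ)]'_
      rw [h1, h2]
    exact hpq (Fin.mk.inj this)
  -- injectivity of simple reflections on positions
  have hvinj : ∀ p q : Fin ω.length, s (ω.get p) = s (ω.get q) → p = q := by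
    intro p q hpq
    have hinj := List.nodup_iff_injective_get.mp hmapnd
    have hlm : (ω.map cs.simple).length = ω.length := List.length_map _
    have : (⟨(p : ℕ), by omega⟩ : Fin (ω.map cs.simple).length)
        = ⟨(q : ℕ), by omega⟩ := by
      apply hinj
      rw [List.get_eq_getElem, List.get_eq_getElem]
      show (ω.map cs.simple)[(p : ℕ)]'_ = (ω.map cs.simple)[(q : ℕ)]'_
      rw [List.getElem_map, List.getElem_map]
      simpa [List.get_eq_getElem] using hpq
    exact Fin.ext (Fin.mk.inj this)
  -- the subword associated with a set of positions
  set word : Finset (Fin ω.length) → List B :=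
      fun T => ((List.finRange ω.length).filter (fun p => p ∈ T)).map ω.get with hworddef
  have hword_sublist : ∀ T, word T <+ ω := by
    intro T
    conv_rhs => rw [← List.map_get_finRange ω]
    exact (List.filter_sublist).map _
  have hword_red : ∀ T, cs.IsReduced (word T) := fun T =>
    sublist_isReduced cs ω hred hmapnd _ (hword_sublist T)
  have hmem_word : ∀ (T) (p : Fin ω.length), ω.get p ∈ word T ↔ p ∈ T := by
    intro T p
    constructor
    · intro hp
      rw [hworddef] at hp
      obtain ⟨q, hq, he⟩ := List.mem_map.mp hp
      have hqT : q ∈ T := by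
        have := (List.mem_filter.mp hq).2
        simpa using this
      rwa [← hget_inj he]
    · intro hp
      rw [hworddef]
      refine List.mem_map.mpr ⟨p, ?_, rfl⟩
      refine List.mem_filter.mpr ⟨List.mem_finRange p, by simpa using hp⟩
  have hword_mono : ∀ T₁ T₂ : Finset (Fin ω.length), T₁ ⊆ T₂ → word T₁ <+ word T₂ := by
    intro T₁ T₂ hsub
    refine List.Sublist.map _ ?_
    refine List.monotone_filter_right _ ?_
    intro p hp
    simp only [decide_eq_true_eq] at hp ⊢
    exact hsub hp
  have hword_le : ∀ T₁ T₂ : Finset (Fin ω.length), T₁ ⊆ T₂ →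
      BruhatLE cs (π (word T₁)) (π (word T₂)) := fun T₁ T₂ hsub =>
    ⟨word T₁, word T₂, hword_red T₁, hword_red T₂, rfl, rfl, hword_mono T₁ T₂ hsub⟩
  have hsupp_sub : ∀ T₁ T₂ : Finset (Fin ω.length),
      BruhatLE cs (π (word T₁)) (π (word T₂)) → T₁ ⊆ T₂ := by
    rintro T₁ T₂ ⟨a, b, hared, hbred, haprod, hbprod, hab⟩ p hp
    have h1 : ω.get p ∈ word T₁ := (hmem_word T₁ p).mpr hp
    obtain ⟨j, hj, hsj⟩ :=
      support_invariance cs (hword_red T₁) hared haprod.symm (ω.get p) h1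
    have hjb : j ∈ b := hab.subset hj
    obtain ⟨j', hj', hsj'⟩ :=
      support_invariance cs hbred (hword_red T₂) (by rw [hbprod]) j hjb
    rw [hworddef] at hj'
    obtain ⟨q, hq, rfl⟩ := List.mem_map.mp hj'
    have hqT : q ∈ T₂ := by
      have := (List.mem_filter.mp hq).2
      simpa using this
    have heq : s (ω.get q) = s (ω.get p) := by rw [hsj', hsj]
    rwa [hvinj q p heq] at hqT
  have hword_inj : ∀ T₁ T₂ : Finset (Fin ω.length),
      π (word T₁) = π (word T₂) → T₁ = T₂ := by
    intro T₁ T₂ he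
    have b1 : BruhatLE cs (π (word T₁)) (π (word T₂)) := he ▸ bruhatLE_refl cs _
    have b2 : BruhatLE cs (π (word T₂)) (π (word T₁)) := he ▸ bruhatLE_refl cs _
    exact subset_antisymm (hsupp_sub _ _ b1) (hsupp_sub _ _ b2)
  have hsurj : ∀ u : W, BruhatLE cs u w → ∃ T, π (word T) = u := by
    intro u hu
    have hble : ble cs u w := (bruhatLE_iff_ble cs).mp hu
    obtain ⟨a, hsub, hared, haprod⟩ := exists_sublist_of_ble cs hble hred hprod
    obtain ⟨is, hiseq, hispw⟩ := List.sublist_eq_map_getElem hsub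
    refine ⟨is.toFinset, ?_⟩
    have hnd_is : is.Nodup := List.Pairwise.imp ne_of_lt hispw
    have hnd_f : ((List.finRange ω.length).filter (fun p => p ∈ is.toFinset)).Nodup :=
      List.filter_sublist.nodup (List.nodup_finRange _)
    have hsort_f : ((List.finRange ω.length).filter
        (fun p => p ∈ is.toFinset)).Pairwise (· < ·) :=
      (List.pairwise_lt_finRange _).sublist List.filter_sublist
    haveI : IsAntisymm (Fin ω.length) (· < ·) :=
      ⟨fun a b h1 h2 => absurd h1 (asymm h2)⟩
    have hfilter : (List.finRange ω.length).filter (fun p => p ∈ is.toFinset) = is := by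
      refine List.Perm.eq_of_pairwise (fun a b _ _ h1 h2 => absurd h1 (asymm h2)) hsort_f hispw ?_
      refine (List.perm_ext_iff_of_nodup hnd_f hnd_is).mpr ?_
      intro q
      simp
    have hfe : word is.toFinset = a := by
      show ((List.finRange ω.length).filter (fun p => p ∈ is.toFinset)).map ω.get = a
      rw [hfilter, hiseq]; rfl
    rw [hfe, haprod]
  have hwordT_mem : ∀ T, BruhatLE cs (π (word T)) w := fun T =>
    ⟨word T, ω, hword_red T, hred, rfl, hprod, hword_sublist T⟩
  set Φ : Finset (Fin ω.length) → {u : W // BruhatLE cs u w} :=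
    fun T => ⟨π (word T), hwordT_mem T⟩ with hΦ
  have hbij : Function.Bijective Φ := by
    constructor
    · intro T₁ T₂ he
      exact hword_inj T₁ T₂ (congrArg Subtype.val he)
    · intro u
      obtain ⟨T, hT⟩ := hsurj u.1 u.2
      exact ⟨T, Subtype.ext hT⟩
  refine ⟨ω.length, (Equiv.ofBijective Φ hbij).symm, ?_⟩
  intro a b
  have ha : a.1 = π (word ((Equiv.ofBijective Φ hbij).symm a)) := by
    conv_lhs => rw [← (Equiv.ofBijective Φ hbij).apply_symm_apply a]
    rfl
  have hb : b.1 = π (word ((Equiv.ofBijective Φ hbij).symm b)) := by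
    conv_lhs => rw [← (Equiv.ofBijective Φ hbij).apply_symm_apply b]
    rfl
  constructor
  · intro hab
    rw [ha, hb] at hab
    exact hsupp_sub _ _ hab
  · intro hsub
    rw [ha, hb]
    exact hword_le _ _ hsub

end Cox
end BooleanAux

/-- **Characterization of boolean elements.**  Let `(W,S)` be a Coxeter system with `S`
finite.  An element `w ∈ W` is boolean if and only if every reduced word for `w` consists
of pairwise distinct generators. -/
theorem isBoolean_iff_nodup_reduced_words {B W : Type*} [Group W] [Fintype B]
    {M : CoxeterMatrix B} (cs : CoxeterSystem M W) (w : W) :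
    IsBoolean cs w ↔
      ∀ ω : List B, cs.IsReduced ω → cs.wordProd ω = w → ω.Nodup := by
  constructor
  · exact fun h => BooleanAux.nodup_of_isBoolean cs h
  · exact fun h => BooleanAux.isBoolean_of_nodup cs h
end

section
/- For every n ≥ 1, Σ_{k=1}^{n} (-1)^{k-1} · ( Σ_{i=1}^{k} C(n+1−i, k+1−i) · C(k−1, i−1) ) = (-1)^{n-1} f(n−1) + 1, where C(a,b) denotes the binomial coefficient and f is the Fibonacci sequence. (The inner sum counts the boolean elements of length k in the Coxeter group A_n, so the left-hand side is the Euler characteristic χ(Δ(A_n)) of the boolean complex of A_n.) -/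
private def Bb (n k : ℕ) : ℕ := ∑ j ∈ Finset.range k, (k-1).choose j * ((n-j).choose (k-j))
private def Xx (n k : ℕ) : ℕ := ∑ j ∈ Finset.range k, (k-1).choose j * ((n-j).choose (k-1-j))

private lemma lemA (n k : ℕ) (hk : k ≤ n + 1) : Bb (n+1) k = Xx n k + Bb n k := by
  unfold Bb Xx
  rw [← Finset.sum_add_distrib]
  apply Finset.sum_congr rfl
  intro j hj
  rw [Finset.mem_range] at hj
  have h1 : n + 1 - j = (n - j) + 1 := by omega
  have h2 : k - j = (k - 1 - j) + 1 := by omega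
  rw [h1, h2, Nat.choose_succ_succ]
  ring

private lemma lemB (n M : ℕ) : Xx (n+1) (M+2) = Bb (n+1) (M+1) + Xx n (M+1) := by
  unfold Bb Xx
  rw [Finset.sum_range_succ' _ (M+1)]
  simp only [Nat.succ_sub_succ, Nat.add_sub_cancel, Nat.sub_zero, Nat.choose_zero_right,
    one_mul, Nat.sub_self]
  have key : ∀ t ∈ Finset.range (M+1),
      (M+1).choose (t+1) * ((n-t).choose (M-t))
        = M.choose t * ((n-t).choose (M-t)) + M.choose (t+1) * ((n-t).choose (M-t)) := by
    intro t ht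
    rw [Nat.choose_succ_succ, Nat.add_mul]
  rw [Finset.sum_congr rfl key, Finset.sum_add_distrib]
  have hB : ∑ j ∈ Finset.range (M+1), M.choose j * ((n+1-j).choose (M+1-j))
      = (∑ t ∈ Finset.range M, M.choose (t+1) * ((n-t).choose (M-t))) + (n+1).choose (M+1) := by
    rw [Finset.sum_range_succ' _ M]
    simp [Nat.succ_sub_succ]
  have hL : ∑ t ∈ Finset.range (M+1), M.choose (t+1) * ((n-t).choose (M-t))
      = ∑ t ∈ Finset.range M, M.choose (t+1) * ((n-t).choose (M-t)) := by
    rw [Finset.sum_range_succ]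
    simp [Nat.choose_succ_self]
  rw [hB, hL]
  ring

private def Tt (n : ℕ) : ℤ := ∑ k ∈ Finset.range n, (-1)^k * (Bb n (k+1) : ℤ)
private def Vv (n : ℕ) : ℤ := ∑ k ∈ Finset.range (n+1), (-1)^k * (Xx n (k+1) : ℤ)

private lemma Bb_diag_zero (n : ℕ) : Bb n (n+1) = 0 := by
  unfold Bb
  apply Finset.sum_eq_zero
  intro j hj
  rw [Finset.mem_range] at hj
  have : (n - j).choose (n + 1 - j) = 0 := Nat.choose_eq_zero_of_lt (by omega)
  simp [this]

private lemma T_rec (n : ℕ) : Tt (n+1) = Vv n + Tt n := by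
  unfold Tt Vv
  have h : ∀ k ∈ Finset.range (n+1), (-1:ℤ)^k * (Bb (n+1) (k+1) : ℤ)
      = (-1)^k * (Xx n (k+1) : ℤ) + (-1)^k * (Bb n (k+1) : ℤ) := by
    intro k hk
    rw [Finset.mem_range] at hk
    rw [lemA n (k+1) (by omega)]
    push_cast
    ring
  rw [Finset.sum_congr rfl h, Finset.sum_add_distrib]
  congr 1
  rw [Finset.sum_range_succ, Bb_diag_zero]
  simp

private lemma Xx_one (n : ℕ) : Xx n 1 = 1 := by
  unfold Xx
  simp

private lemma V_rec (n : ℕ) : Vv (n+1) = 1 - Tt (n+1) - Vv n := by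
  unfold Vv Tt
  rw [Finset.sum_range_succ' _ (n+1)]
  have h : ∀ t ∈ Finset.range (n+1), (-1:ℤ)^(t+1) * (Xx (n+1) (t+2) : ℤ)
      = -((-1)^t * (Bb (n+1) (t+1) : ℤ)) + -((-1)^t * (Xx n (t+1) : ℤ)) := by
    intro t ht
    rw [lemB n t]
    push_cast
    ring
  rw [Finset.sum_congr rfl h, Finset.sum_add_distrib, Xx_one]
  simp [Finset.sum_neg_distrib]
  ring

private lemma main_ind (n : ℕ) :
    Tt (n+1) = (-1)^n * (Nat.fib n : ℤ) + 1 ∧ Vv (n+1) = (-1)^(n+1) * (Nat.fib (n+2) : ℤ) := by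
  induction n with
  | zero =>
    constructor
    · simp [Tt, Bb, Finset.sum_range_succ]
    · have := V_rec 0
      rw [this]
      simp [Tt, Vv, Bb, Xx, Finset.sum_range_succ]
  | succ m ih =>
    obtain ⟨h1, h2⟩ := ih
    have hT : Tt (m+2) = (-1)^(m+1) * (Nat.fib (m+1) : ℤ) + 1 := by
      rw [T_rec (m+1), h1, h2]
      have : (Nat.fib (m+2) : ℤ) = Nat.fib m + Nat.fib (m+1) := by
        rw [Nat.fib_add_two]; push_cast; ring
      rw [this]
      ring
    refine ⟨hT, ?_⟩
    rw [V_rec (m+1), hT, h2]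
    have h3 : (Nat.fib (m+3) : ℤ) = Nat.fib (m+1) + Nat.fib (m+2) := by
      rw [show m+3 = (m+1)+2 from rfl, Nat.fib_add_two]; push_cast; ring
    rw [h3]
    ring

/-- **Euler characteristic of the boolean complex of `A_n`.**  For every `n ≥ 1`,
`∑_{k=1}^{n} (-1)^{k-1} ∑_{i=1}^{k} C(n+1-i, k+1-i) C(k-1, i-1) = (-1)^{n-1} f(n-1) + 1`,
where the inner sum counts boolean elements of length `k` in the Coxeter group `A_n`
and `f` is the Fibonacci sequence. -/
theorem eulerChar_boolean_complex_A (n : ℕ) (hn : 1 ≤ n) :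
    ∑ k ∈ Finset.Icc 1 n, (-1 : ℤ) ^ (k - 1) *
        ∑ i ∈ Finset.Icc 1 k,
          (((n + 1 - i).choose (k + 1 - i) * (k - 1).choose (i - 1) : ℕ) : ℤ)
      = (-1) ^ (n - 1) * (Nat.fib (n - 1) : ℤ) + 1 := by
  obtain ⟨m, rfl⟩ : ∃ m, n = m + 1 := ⟨n - 1, by omega⟩
  have hmain := (main_ind m).1
  have hLHS : ∑ k ∈ Finset.Icc 1 (m+1), (-1 : ℤ) ^ (k - 1) *
        ∑ i ∈ Finset.Icc 1 k,
          (((m + 1 + 1 - i).choose (k + 1 - i) * (k - 1).choose (i - 1) : ℕ) : ℤ)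
      = Tt (m+1) := by
    unfold Tt
    rw [← Finset.Ico_add_one_right_eq_Icc, Finset.sum_Ico_eq_sum_range]
    apply Finset.sum_congr rfl
    intro k hk
    congr 1
    · congr 1
      omega
    · unfold Bb
      rw [← Finset.Ico_add_one_right_eq_Icc, Finset.sum_Ico_eq_sum_range]
      push_cast
      apply Finset.sum_congr (by congr 1; omega)
      intro j hj
      have e1 : m + 1 + 1 - (1 + j) = m + 1 - j := by omega
      have e2 : 1 + k + 1 - (1 + j) = k + 1 - j := by omega
      have e3 : 1 + k - 1 = k := by omega
      have e4 : 1 + j - 1 = j := by omega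
      rw [e1, e2, e3, e4]
      ring
  rw [hLHS, hmain]
  simp
end
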